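/- arXiv:1601.08072 — 5 statements merged into one kernel-verified Lean document; each statement's English description precedes it below -/
import Mathlib

section
/- Ω ∩ Ω′ = Z; that is, the intersection of the two unbounded Reinhardt domains Ω and Ω′ is exactly the closed polydisc Z = {(z₁,z₂) ∈ ℂ² : |z₁| ≤ 4 and |z₂| ≤ 4}. -/
open Complex

private lemma logfact {r : ℝ} (hr : 4 < r) : 1 < Real.log r / Real.log 4 := by
  have h4 : (0:ℝ) < Real.log 4 := Real.log_pos (by norm_num)
  have := Real.log_lt_log (by norm_num : (0:ℝ) < 4) hr
  exact (one_lt_div h4).mpr this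

/-- Contradiction for X ∩ X' (and symmetrically Y ∩ Y'). -/
private lemma aux1 {r L a : ℝ} (hr : 4 < r) (hL : 1 < L)
    (h1 : a < 1 / (2 * r * L)) (h2 : |a - 1 / r| < 1 / r ^ 3) : False := by
  have hr0 : (0:ℝ) < r := by linarith
  have hlow : 1 / r - 1 / r ^ 3 < a := by
    have := (abs_lt.mp h2).1; linarith
  have e1 : 1 / (2 * r * L) ≤ 1 / (2 * r) := by
    apply one_div_le_one_div_of_le (by positivity)
    nlinarith
  have e2 : 1 / (2 * r) ≤ 1 / r - 1 / r ^ 3 := by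
    have h : 1 / r - 1 / r ^ 3 - 1 / (2 * r) = (r ^ 2 - 2) / (2 * r ^ 3) := by
      field_simp; ring
    nlinarith [div_nonneg (by nlinarith : (0:ℝ) ≤ r ^ 2 - 2) (by positivity : (0:ℝ) ≤ 2 * r ^ 3)]
  linarith

/-- Contradiction for X ∩ Y' (and symmetrically Y ∩ X' via aux3). -/
private lemma aux2 {r L a : ℝ} (hr : 4 < r) (hL : 1 < L)
    (h1 : a < 1 / (2 * r * L)) (h2 : 4 < a) : False := by
  have e1 : 1 / (2 * r * L) ≤ 1 / 8 := by
    apply one_div_le_one_div_of_le (by norm_num)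
    nlinarith
  linarith

/-- From Y-type membership, the other coordinate is small. -/
private lemma aux3 {s a : ℝ} (hs : 4 < s) (h : |a - 1 / s| < 1 / s ^ 3) : a < 4 := by
  have hs0 : (0:ℝ) < s := by linarith
  have hup : a < 1 / s + 1 / s ^ 3 := by
    have := (abs_lt.mp h).2; linarith
  have e1 : 1 / s ≤ 1 / 4 := one_div_le_one_div_of_le (by norm_num) hs.le
  have e2 : 1 / s ^ 3 ≤ 1 / 64 := by
    apply one_div_le_one_div_of_le (by norm_num)
    nlinarith [sq_nonneg s, sq_nonneg (s-4), mul_pos hs0 hs0]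
  linarith

/-- The intersection of the two unbounded Reinhardt domains `Ω = X ∪ Y ∪ Z` and
`Ω′ = X′ ∪ Y′ ∪ Z` is exactly the closed polydisc `Z`. -/
theorem stmt_3 (X Y Z X' Y' Ω Ω' : Set (ℂ × ℂ))
    (hX : X = {z : ℂ × ℂ | 4 < ‖z.1‖ ∧
      ‖z.2‖ < 1 / (2 * ‖z.1‖ * (Real.log (‖z.1‖) / Real.log 4))})
    (hY : Y = {z : ℂ × ℂ | 4 < ‖z.2‖ ∧
      |‖z.1‖ - 1 / ‖z.2‖| < 1 / (‖z.2‖) ^ 3})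
    (hZ : Z = {z : ℂ × ℂ | ‖z.1‖ ≤ 4 ∧ ‖z.2‖ ≤ 4})
    (hX' : X' = {z : ℂ × ℂ | 4 < ‖z.1‖ ∧
      |‖z.2‖ - 1 / ‖z.1‖| < 1 / (‖z.1‖) ^ 3})
    (hY' : Y' = {z : ℂ × ℂ | 4 < ‖z.2‖ ∧
      ‖z.1‖ < 1 / (2 * ‖z.2‖ * (Real.log (‖z.2‖) / Real.log 4))})
    (hΩ : Ω = X ∪ Y ∪ Z) (hΩ' : Ω' = X' ∪ Y' ∪ Z) :
    Ω ∩ Ω' = Z := by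
  subst hX hY hZ hX' hY' hΩ hΩ'
  ext z
  simp only [Set.mem_inter_iff, Set.mem_union, Set.mem_setOf_eq]
  constructor
  · rintro ⟨((⟨h1, h2⟩ | ⟨h1, h2⟩) | h) , ((⟨h1', h2'⟩ | ⟨h1', h2'⟩) | h')⟩
    · exact absurd h2' (by simpa using (aux1 h1 (logfact h1) h2 h2').elim)
    · exact (aux2 h1 (logfact h1) h2 h1').elim
    · exact h'
    · exact absurd h1' (not_lt.mpr (aux3 h1 h2).le)
    · exact (aux1 h1' (logfact h1') h2' h2).elim
    · exact h'
    · exact h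
    · exact h
    · exact h
  · intro h
    exact ⟨Or.inr h, Or.inr h⟩
end

section
/- Both Ω and Ω′ have finite Lebesgue volume: vol(Ω) < ∞ and vol(Ω′) < ∞ (even though both sets are unbounded). -/
open Complex MeasureTheory Metric

lemma aux_summable (C : ℝ) : Summable (fun n : ℕ => C / ((n : ℝ) + 1) ^ 2) := by
  have h : Summable (fun n : ℕ => 1 / ((n : ℝ)) ^ 2) :=
    Real.summable_one_div_nat_pow.mpr one_lt_two
  have h2 : Summable (fun n : ℕ => 1 / (((n + 1 : ℕ)) : ℝ) ^ 2) :=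
    h.comp_injective (add_left_injective 1)
  have h3 : Summable (fun n : ℕ => 1 / ((n : ℝ) + 1) ^ 2) := by
    convert h2 using 2 with n
    push_cast; ring
  simpa [div_eq_mul_inv] using h3.mul_left C

lemma aux_master {S : Set (ℂ × ℂ)} {A B : ℕ → Set ℂ} {c : ℕ → ℝ}
    (hcov : S ⊆ ⋃ n, A n ×ˢ B n)
    (hb : ∀ n, volume (A n) * volume (B n) ≤ ENNReal.ofReal (c n))
    (hc0 : ∀ n, 0 ≤ c n) (hc : Summable c) : volume S < ⊤ := by
  have h1 : volume S ≤ ∑' n, ENNReal.ofReal (c n) :=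
    calc volume S ≤ volume (⋃ n, A n ×ˢ B n) := measure_mono hcov
    _ ≤ ∑' n, volume (A n ×ˢ B n) := measure_iUnion_le _
    _ ≤ ∑' n, ENNReal.ofReal (c n) := by
        refine ENNReal.tsum_le_tsum fun n => ?_
        rw [show (volume : Measure (ℂ × ℂ)) = (volume : Measure ℂ).prod volume from rfl,
          Measure.prod_prod]
        exact hb n
  have h2 : ∑' n, ENNReal.ofReal (c n) < ⊤ := by
    rw [← ENNReal.ofReal_tsum_of_nonneg hc0 hc]
    exact ENNReal.ofReal_lt_top
  exact lt_of_le_of_lt h1 h2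

lemma aux_pi : ((NNReal.pi : ENNReal)) = ENNReal.ofReal Real.pi := by
  rw [← NNReal.coe_real_pi, ENNReal.ofReal_coe_nnreal]

lemma aux_vol_ball (r : ℝ) (hr : 0 ≤ r) :
    volume (ball (0 : ℂ) r) = ENNReal.ofReal (Real.pi * r ^ 2) := by
  rw [Complex.volume_ball, aux_pi, ← ENNReal.ofReal_pow hr,
    ← ENNReal.ofReal_mul (by positivity)]
  ring_nf

lemma aux_vol_cball (r : ℝ) (hr : 0 ≤ r) :
    volume (closedBall (0 : ℂ) r) = ENNReal.ofReal (Real.pi * r ^ 2) := by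
  rw [Complex.volume_closedBall, aux_pi, ← ENNReal.ofReal_pow hr,
    ← ENNReal.ofReal_mul (by positivity)]
  ring_nf

lemma aux_vol_annulus (a b : ℝ) (h0 : 0 ≤ a) (hab : a ≤ b) :
    volume (closedBall (0 : ℂ) b \ ball (0 : ℂ) a)
      = ENNReal.ofReal (Real.pi * (b ^ 2 - a ^ 2)) := by
  rw [measure_diff ((ball_subset_ball hab).trans ball_subset_closedBall)
    measurableSet_ball.nullMeasurableSet measure_ball_lt_top.ne,
    aux_vol_cball b (h0.trans hab), aux_vol_ball a h0,
    ← ENNReal.ofReal_sub _ (by positivity)]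
  ring_nf

lemma aux_finX : volume {z : ℂ × ℂ | 4 < ‖z.1‖ ∧
    ‖z.2‖ < 1 / (2 * ‖z.1‖ * (Real.log (‖z.1‖) / Real.log 4))}
    < ⊤ := by
  refine aux_master (A := fun n => closedBall 0 ((4 : ℝ) ^ (n + 2)))
    (B := fun n => ball 0 (1 / (2 * 4 ^ (n + 1) * ((n : ℝ) + 1))))
    (c := fun n => 4 * Real.pi ^ 2 / ((n : ℝ) + 1) ^ 2) ?_ ?_ (fun n => by positivity)
    (aux_summable _)
  · intro z hz
    obtain ⟨hz1, hz2⟩ := hz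
    set t := ‖z.1‖ with ht
    have ht4 : (4 : ℝ) < t := hz1
    have hex : ∃ m : ℕ, t < 4 ^ m := pow_unbounded_of_one_lt t (by norm_num)
    set m := Nat.find hex with hm
    have hspec : t < 4 ^ m := Nat.find_spec hex
    have hm2 : 2 ≤ m := by
      rw [hm]
      refine (Nat.le_find_iff hex 2).mpr ?_
      intro k hk
      interval_cases k
      · push_neg; norm_num; linarith
      · push_neg; norm_num; linarith
    have hlow : (4 : ℝ) ^ (m - 1) ≤ t := by
      have h := Nat.find_min hex (show m - 1 < Nat.find hex by omega)
      push_neg at h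
      exact h
    refine Set.mem_iUnion.2 ⟨m - 2, Set.mem_prod.2 ⟨?_, ?_⟩⟩
    · simp only [mem_closedBall_zero_iff, ← ht]
      have e1 : m - 2 + 2 = m := by omega
      rw [e1]
      exact hspec.le
    · simp only [mem_ball_zero_iff]
      refine lt_of_lt_of_le hz2 ?_
      have e2 : m - 2 + 1 = m - 1 := by omega
      rw [e2]
      have hlog4 : 0 < Real.log 4 := Real.log_pos (by norm_num)
      have hcast : ((m - 2 : ℕ) : ℝ) + 1 = ((m - 1 : ℕ) : ℝ) := by
        have h : (m - 2) + 1 = m - 1 := by omega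
        exact_mod_cast congrArg (Nat.cast : ℕ → ℝ) h
      rw [hcast]
      have hk : ((m - 1 : ℕ) : ℝ) ≤ Real.log t / Real.log 4 := by
        rw [le_div_iff₀ hlog4]
        have h := Real.log_le_log (by positivity : (0:ℝ) < 4 ^ (m - 1)) hlow
        rwa [Real.log_pow] at h
      have hc1 : (1 : ℝ) ≤ ((m - 1 : ℕ) : ℝ) := by
        exact_mod_cast (show 1 ≤ m - 1 by omega)
      have hpos1 : (0 : ℝ) < 2 * 4 ^ (m - 1) * ((m - 1 : ℕ) : ℝ) := by positivity
      refine one_div_le_one_div_of_le hpos1 ?_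
      have h1 : (2 : ℝ) * 4 ^ (m - 1) ≤ 2 * t := by linarith
      exact mul_le_mul h1 hk (by linarith) (by linarith)
  · intro n
    have hb1 : (0:ℝ) ≤ (4 : ℝ) ^ (n + 2) := by positivity
    have hb2 : (0:ℝ) ≤ 1 / (2 * 4 ^ (n + 1) * ((n : ℝ) + 1)) := by positivity
    rw [aux_vol_cball _ hb1, aux_vol_ball _ hb2,
      ← ENNReal.ofReal_mul (by positivity)]
    apply ENNReal.ofReal_le_ofReal
    have key : Real.pi * ((4:ℝ) ^ (n + 2)) ^ 2
        * (Real.pi * (1 / (2 * 4 ^ (n + 1) * ((n : ℝ) + 1))) ^ 2)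
        = 4 * Real.pi ^ 2 / ((n : ℝ) + 1) ^ 2 := by
      have h4 : (4:ℝ) ^ (n + 2) = 4 * 4 ^ (n + 1) := by ring
      rw [h4]
      have ha : ((4:ℝ) ^ (n + 1)) ≠ 0 := by positivity
      have hb : ((n : ℝ) + 1) ≠ 0 := by positivity
      field_simp
      ring
    rw [key]

lemma aux_finY : volume {z : ℂ × ℂ | 4 < ‖z.2‖ ∧
    |‖z.1‖ - 1 / ‖z.2‖| < 1 / (‖z.2‖) ^ 3} < ⊤ := by
  refine aux_master
    (A := fun n => closedBall 0 (1 / ((n : ℝ) + 4) + 1 / ((n : ℝ) + 4) ^ 3)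
      \ ball 0 (1 / ((n : ℝ) + 4 + 1) - 1 / ((n : ℝ) + 4) ^ 3))
    (B := fun n => closedBall 0 ((n : ℝ) + 4 + 1) \ ball 0 ((n : ℝ) + 4))
    (c := fun n => 27 * Real.pi ^ 2 / ((n : ℝ) + 1) ^ 2) ?_ ?_ (fun n => by positivity)
    (aux_summable _)
  · intro z hz
    obtain ⟨hz2, hz1⟩ := hz
    set s := ‖z.2‖ with hs
    set r := ‖z.1‖ with hr
    have hs4 : (4 : ℝ) < s := hz2
    have hs0 : (0 : ℝ) < s := by linarith
    have h4fl : 4 ≤ Nat.floor s := Nat.le_floor (by exact_mod_cast hs4.le)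
    have hmfl : ((Nat.floor s - 4 : ℕ) : ℝ) + 4 = ((Nat.floor s : ℕ) : ℝ) := by
      have h : (Nat.floor s - 4) + 4 = Nat.floor s := by omega
      exact_mod_cast congrArg (Nat.cast : ℕ → ℝ) h
    set m : ℝ := ((Nat.floor s : ℕ) : ℝ) with hmdef
    have hfl : m ≤ s := Nat.floor_le hs0.le
    have hfl2 : s < m + 1 := Nat.lt_floor_add_one s
    have hm4 : (4 : ℝ) ≤ m := by rw [hmdef]; exact_mod_cast h4fl
    have hm0 : (0 : ℝ) < m := by linarith
    refine Set.mem_iUnion.2 ⟨Nat.floor s - 4, Set.mem_prod.2 ⟨?_, ?_⟩⟩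
    · simp only [Set.mem_diff, mem_closedBall_zero_iff, mem_ball_zero_iff,
        ← hr]
      rw [hmfl]
      obtain ⟨hlow', hup'⟩ := abs_lt.mp hz1
      have hm3 : (0 : ℝ) < m ^ 3 := by positivity
      have h1s : 1 / s ≤ 1 / m := one_div_le_one_div_of_le hm0 hfl
      have h1s3 : 1 / s ^ 3 ≤ 1 / m ^ 3 := by
        apply one_div_le_one_div_of_le hm3
        exact pow_le_pow_left₀ hm0.le hfl 3
      have h1s' : 1 / (m + 1) ≤ 1 / s := one_div_le_one_div_of_le hs0 hfl2.le
      constructor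
      · linarith
      · push_neg; linarith
    · simp only [Set.mem_diff, mem_closedBall_zero_iff, mem_ball_zero_iff,
        ← hs]
      rw [hmfl]
      exact ⟨hfl2.le, by push_neg; exact hfl⟩
  · intro n
    have hm4 : (4 : ℝ) ≤ (n : ℝ) + 4 := by
      have := Nat.cast_nonneg (α := ℝ) n; linarith
    set m : ℝ := (n : ℝ) + 4 with hmdef
    have hm0 : (0 : ℝ) < m := by linarith
    have hm3 : (0 : ℝ) < m ^ 3 := by positivity
    set lo : ℝ := 1 / (m + 1) - 1 / m ^ 3 with hlo
    set up : ℝ := 1 / m + 1 / m ^ 3 with hup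
    have hm1m3 : m + 1 ≤ m ^ 3 := by
      nlinarith [mul_nonneg (mul_nonneg hm0.le (sub_nonneg.mpr hm4))
        (show (0:ℝ) ≤ m + 4 by linarith)]
    have hlo0 : 0 ≤ lo := by
      rw [hlo, sub_nonneg]
      exact one_div_le_one_div_of_le (by linarith) hm1m3
    have hlup : lo ≤ up := by
      rw [hlo, hup]
      have h2 : 1 / (m + 1) ≤ 1 / m := one_div_le_one_div_of_le hm0 (by linarith)
      have h3 : (0:ℝ) ≤ 1 / m ^ 3 := by positivity
      linarith
    have hsq0 : lo ^ 2 ≤ up ^ 2 := pow_le_pow_left₀ hlo0 hlup 2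
    rw [aux_vol_annulus lo up hlo0 hlup, aux_vol_annulus m (m + 1) hm0.le (by linarith),
      ← ENNReal.ofReal_mul (mul_nonneg Real.pi_pos.le (by linarith))]
    apply ENNReal.ofReal_le_ofReal
    have hsum : up + lo ≤ 3 / m := by
      rw [hup, hlo]
      have h1 : 1 / m ^ 3 ≤ 1 / m := by
        apply one_div_le_one_div_of_le hm0; nlinarith
      have h2 : 1 / (m + 1) ≤ 1 / m := one_div_le_one_div_of_le hm0 (by linarith)
      have h0 : (0:ℝ) ≤ 1 / m := by positivity
      have h3 : 3 / m = 1 / m + 1 / m + 1 / m := by ring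
      linarith
    have hdiff : up - lo ≤ 3 / m ^ 2 := by
      rw [hup, hlo]
      have h1 : 1 / m - 1 / (m + 1) ≤ 1 / m ^ 2 := by
        rw [div_sub_div _ _ (by linarith : m ≠ 0) (by linarith : m + 1 ≠ 0),
          div_le_div_iff₀ (by positivity) (by positivity)]
        nlinarith
      have h2 : 1 / m ^ 3 ≤ 1 / m ^ 2 := by
        apply one_div_le_one_div_of_le (by positivity); nlinarith
      have h3 : 3 / m ^ 2 = 1 / m ^ 2 + 1 / m ^ 2 + 1 / m ^ 2 := by ring
      linarith
    have hsq : up ^ 2 - lo ^ 2 ≤ 9 / m ^ 3 := by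
      have he : up ^ 2 - lo ^ 2 = (up + lo) * (up - lo) := by ring
      rw [he]
      calc (up + lo) * (up - lo) ≤ 3 / m * (3 / m ^ 2) :=
            mul_le_mul hsum hdiff (by linarith) (by positivity)
        _ = 9 / m ^ 3 := by field_simp; ring
    have hann : (m + 1) ^ 2 - m ^ 2 ≤ 3 * m := by nlinarith
    have hmn : (n : ℝ) + 1 ≤ m := by rw [hmdef]; linarith
    have hn0 : (0 : ℝ) < (n : ℝ) + 1 := by positivity
    have hpi : (0 : ℝ) < Real.pi := Real.pi_pos
    calc Real.pi * (up ^ 2 - lo ^ 2) * (Real.pi * ((m + 1) ^ 2 - m ^ 2))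
        ≤ Real.pi * (9 / m ^ 3) * (Real.pi * (3 * m)) := by
          apply mul_le_mul (mul_le_mul_of_nonneg_left hsq hpi.le)
            (mul_le_mul_of_nonneg_left hann hpi.le)
            (mul_nonneg hpi.le (by nlinarith)) (by positivity)
      _ = 27 * Real.pi ^ 2 / m ^ 2 := by field_simp; ring
      _ ≤ 27 * Real.pi ^ 2 / ((n : ℝ) + 1) ^ 2 := by
          rw [div_le_div_iff₀ (by positivity) (by positivity)]
          have hsq2 : ((n : ℝ) + 1) ^ 2 ≤ m ^ 2 := pow_le_pow_left₀ hn0.le hmn 2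
          exact mul_le_mul_of_nonneg_left hsq2 (by positivity)

lemma aux_finZ : volume {z : ℂ × ℂ | ‖z.1‖ ≤ 4 ∧ ‖z.2‖ ≤ 4} < ⊤ := by
  have hsub : {z : ℂ × ℂ | ‖z.1‖ ≤ 4 ∧ ‖z.2‖ ≤ 4}
      ⊆ closedBall (0 : ℂ) 4 ×ˢ closedBall (0 : ℂ) 4 := by
    intro z hz
    exact ⟨by rw [mem_closedBall_zero_iff]; exact hz.1,
      by rw [mem_closedBall_zero_iff]; exact hz.2⟩
  refine lt_of_le_of_lt (measure_mono hsub) ?_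
  rw [show (volume : Measure (ℂ × ℂ)) = (volume : Measure ℂ).prod volume from rfl,
    Measure.prod_prod]
  exact ENNReal.mul_lt_top measure_closedBall_lt_top measure_closedBall_lt_top

lemma aux_measX : MeasurableSet {z : ℂ × ℂ | 4 < ‖z.1‖ ∧
    ‖z.2‖ < 1 / (2 * ‖z.1‖ * (Real.log (‖z.1‖) / Real.log 4))} := by
  have h1 : Measurable fun z : ℂ × ℂ => ‖z.1‖ := by
    exact measurable_norm.comp (measurable_fst (α := ℂ) (β := ℂ))
  have h2 : Measurable fun z : ℂ × ℂ => ‖z.2‖ := by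
    exact measurable_norm.comp (measurable_snd (α := ℂ) (β := ℂ))
  apply MeasurableSet.inter
  · exact measurableSet_lt measurable_const h1
  · exact measurableSet_lt h2 (Measurable.div measurable_const
      ((measurable_const.mul h1).mul ((Real.measurable_log.comp h1).div measurable_const)))

lemma aux_measY : MeasurableSet {z : ℂ × ℂ | 4 < ‖z.2‖ ∧
    |‖z.1‖ - 1 / ‖z.2‖| < 1 / (‖z.2‖) ^ 3} := by
  have h1 : Measurable fun z : ℂ × ℂ => ‖z.1‖ := by
    exact measurable_norm.comp (measurable_fst (α := ℂ) (β := ℂ))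
  have h2 : Measurable fun z : ℂ × ℂ => ‖z.2‖ := by
    exact measurable_norm.comp (measurable_snd (α := ℂ) (β := ℂ))
  apply MeasurableSet.inter
  · exact measurableSet_lt measurable_const h2
  · exact measurableSet_lt ((h1.sub (measurable_const.div h2)).abs)
      (measurable_const.div (h2.pow measurable_const))

lemma aux_finY' : volume {z : ℂ × ℂ | 4 < ‖z.2‖ ∧
    ‖z.1‖ < 1 / (2 * ‖z.2‖ * (Real.log (‖z.2‖) / Real.log 4))}
    < ⊤ := by
  have hpre : {z : ℂ × ℂ | 4 < ‖z.2‖ ∧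
      ‖z.1‖ < 1 / (2 * ‖z.2‖ * (Real.log (‖z.2‖) / Real.log 4))}
      = Prod.swap ⁻¹' {z : ℂ × ℂ | 4 < ‖z.1‖ ∧
      ‖z.2‖ < 1 / (2 * ‖z.1‖ * (Real.log (‖z.1‖) / Real.log 4))} :=
    rfl
  rw [hpre, show (volume : Measure (ℂ × ℂ)) = (volume : Measure ℂ).prod volume from rfl,
    (Measure.measurePreserving_swap (μ := (volume : Measure ℂ)) (ν := volume)).measure_preimage aux_measX.nullMeasurableSet]
  exact aux_finX

lemma aux_finX' : volume {z : ℂ × ℂ | 4 < ‖z.1‖ ∧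
    |‖z.2‖ - 1 / ‖z.1‖| < 1 / (‖z.1‖) ^ 3} < ⊤ := by
  have hpre : {z : ℂ × ℂ | 4 < ‖z.1‖ ∧
      |‖z.2‖ - 1 / ‖z.1‖| < 1 / (‖z.1‖) ^ 3}
      = Prod.swap ⁻¹' {z : ℂ × ℂ | 4 < ‖z.2‖ ∧
      |‖z.1‖ - 1 / ‖z.2‖| < 1 / (‖z.2‖) ^ 3} := rfl
  rw [hpre, show (volume : Measure (ℂ × ℂ)) = (volume : Measure ℂ).prod volume from rfl,
    (Measure.measurePreserving_swap (μ := (volume : Measure ℂ)) (ν := volume)).measure_preimage aux_measY.nullMeasurableSet]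
  exact aux_finY

/-- Both unbounded Reinhardt domains `Ω` and `Ω′` have finite Lebesgue volume. -/
theorem stmt_4 (X Y Z X' Y' Ω Ω' : Set (ℂ × ℂ))
    (hX : X = {z : ℂ × ℂ | 4 < ‖z.1‖ ∧
      ‖z.2‖ < 1 / (2 * ‖z.1‖ * (Real.log (‖z.1‖) / Real.log 4))})
    (hY : Y = {z : ℂ × ℂ | 4 < ‖z.2‖ ∧
      |‖z.1‖ - 1 / ‖z.2‖| < 1 / (‖z.2‖) ^ 3})
    (hZ : Z = {z : ℂ × ℂ | ‖z.1‖ ≤ 4 ∧ ‖z.2‖ ≤ 4})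
    (hX' : X' = {z : ℂ × ℂ | 4 < ‖z.1‖ ∧
      |‖z.2‖ - 1 / ‖z.1‖| < 1 / (‖z.1‖) ^ 3})
    (hY' : Y' = {z : ℂ × ℂ | 4 < ‖z.2‖ ∧
      ‖z.1‖ < 1 / (2 * ‖z.2‖ * (Real.log (‖z.2‖) / Real.log 4))})
    (hΩ : Ω = X ∪ Y ∪ Z) (hΩ' : Ω' = X' ∪ Y' ∪ Z) :
    volume Ω < ⊤ ∧ volume Ω' < ⊤ := by
  subst hX hY hZ hX' hY' hΩ hΩ'
  constructor
  · refine lt_of_le_of_lt (measure_union_le _ _) (ENNReal.add_lt_top.mpr ⟨?_, aux_finZ⟩)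
    exact lt_of_le_of_lt (measure_union_le _ _)
      (ENNReal.add_lt_top.mpr ⟨aux_finX, aux_finY⟩)
  · refine lt_of_le_of_lt (measure_union_le _ _) (ENNReal.add_lt_top.mpr ⟨?_, aux_finZ⟩)
    exact lt_of_le_of_lt (measure_union_le _ _)
      (ENNReal.add_lt_top.mpr ⟨aux_finX', aux_finY'⟩)
end

section
/- For natural numbers j and k, the integral ∫_{Ω′} |z₁|^{2j} |z₂|^{2k} dV(z₁,z₂) is finite if and only if j = k. -/
open Complex MeasureTheory Set Metric
open scoped ENNReal NNReal

namespace Stmt6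

lemma vol_oc {a b : ℝ} (ha : 0 ≤ a) (hab : a ≤ b) :
    volume {z : ℂ | a < ‖z‖ ∧ ‖z‖ ≤ b}
      = ENNReal.ofReal (Real.pi * (b ^ 2 - a ^ 2)) := by
  have hset : {z : ℂ | a < ‖z‖ ∧ ‖z‖ ≤ b}
      = Metric.closedBall 0 b \ Metric.closedBall 0 a := by
    ext z
    simp [Complex.dist_eq, not_le, and_comm]
  rw [hset, measure_diff (closedBall_subset_closedBall hab)
      measurableSet_closedBall.nullMeasurableSet
      (by rw [Complex.volume_closedBall]; exact ENNReal.mul_ne_top (by simp) (by simp)),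
    Complex.volume_closedBall, Complex.volume_closedBall]
  rw [← ENNReal.ofReal_pow ha, ← ENNReal.ofReal_pow (ha.trans hab),
    ← ENNReal.ofReal_coe_nnreal, NNReal.coe_real_pi,
    ← ENNReal.ofReal_mul (by positivity), ← ENNReal.ofReal_mul (by positivity),
    ← ENNReal.ofReal_sub _ (by positivity)]
  ring_nf

lemma vol_oo {a b : ℝ} (ha : 0 ≤ a) (hab : a < b) :
    volume {z : ℂ | a < ‖z‖ ∧ ‖z‖ < b}
      = ENNReal.ofReal (Real.pi * (b ^ 2 - a ^ 2)) := by
  have hset : {z : ℂ | a < ‖z‖ ∧ ‖z‖ < b}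
      = Metric.ball 0 b \ Metric.closedBall 0 a := by
    ext z
    simp [Complex.dist_eq, not_le, and_comm]
  rw [hset, measure_diff (closedBall_subset_ball hab)
      measurableSet_closedBall.nullMeasurableSet
      (by rw [Complex.volume_closedBall]; exact ENNReal.mul_ne_top (by simp) (by simp)),
    Complex.volume_ball, Complex.volume_closedBall]
  rw [← ENNReal.ofReal_pow ha, ← ENNReal.ofReal_pow (ha.trans hab.le),
    ← ENNReal.ofReal_coe_nnreal, NNReal.coe_real_pi,
    ← ENNReal.ofReal_mul (by positivity), ← ENNReal.ofReal_mul (by positivity),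
    ← ENNReal.ofReal_sub _ (by positivity)]
  ring_nf

def A (n : ℕ) : Set ℂ := {z | 4 * 2 ^ n < ‖z‖ ∧ ‖z‖ ≤ 4 * 2 ^ (n + 1)}

lemma measA (n : ℕ) : MeasurableSet (A n) := by
  have : A n = (fun z : ℂ => ‖z‖) ⁻¹' (Set.Ioc (4 * 2 ^ n) (4 * 2 ^ (n + 1))) := rfl
  rw [this]
  exact continuous_norm.measurable measurableSet_Ioc

lemma volA (n : ℕ) : volume (A n) = ENNReal.ofReal (Real.pi * (48 * 4 ^ n)) := by
  have h := vol_oc (a := 4 * 2 ^ n) (b := 4 * 2 ^ (n + 1)) (by positivity)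
    (by have : (2:ℝ) ^ n ≤ 2 ^ (n + 1) := by
          exact pow_le_pow_right₀ one_le_two (Nat.le_succ n)
        linarith)
  rw [show A n = {z : ℂ | 4 * 2 ^ n < ‖z‖ ∧ ‖z‖ ≤ 4 * 2 ^ (n + 1)} from rfl, h]
  congr 1
  have h2 : ((2:ℝ) ^ n) ^ 2 = 4 ^ n := by
    rw [← pow_mul, mul_comm, pow_mul]; norm_num
  rw [pow_succ]
  ring_nf
  rw [pow_mul, h2]

lemma exists_dyadic {s : ℝ} (hs : 4 < s) : ∃ n : ℕ, 4 * 2 ^ n < s ∧ s ≤ 4 * 2 ^ (n + 1) := by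
  classical
  have h0 : ∃ n : ℕ, s ≤ 4 * 2 ^ (n + 1) := by
    obtain ⟨n, hn⟩ := pow_unbounded_of_one_lt s (by norm_num : (1:ℝ) < 2)
    refine ⟨n, ?_⟩
    have h1 : (2:ℝ) ^ n ≤ 2 ^ (n + 1) := pow_le_pow_right₀ one_le_two (Nat.le_succ n)
    have h2 : (0:ℝ) < 2 ^ n := by positivity
    nlinarith
  refine ⟨Nat.find h0, ?_, Nat.find_spec h0⟩
  rcases Nat.eq_zero_or_pos (Nat.find h0) with h | h
  · rw [h]; simpa using hs
  · have hm := Nat.find_min h0 (m := Nat.find h0 - 1) (by omega)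
    push_neg at hm
    have : Nat.find h0 - 1 + 1 = Nat.find h0 := by omega
    rwa [this] at hm

lemma disjA : Pairwise (Function.onFun Disjoint A) := by
  intro m n hmn
  wlog h : m < n generalizing m n
  · exact (this hmn.symm (by omega)).symm
  simp only [Function.onFun, Set.disjoint_left]
  intro z hzm hzn
  have h1 : (2:ℝ) ^ (m + 1) ≤ 2 ^ n := pow_le_pow_right₀ one_le_two h
  have := hzm.2
  have := hzn.1
  simp only [A, Set.mem_setOf_eq] at *
  nlinarith

lemma unionA : {z : ℂ | 4 < ‖z‖} = ⋃ n, A n := by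
  ext z
  simp only [Set.mem_setOf_eq, Set.mem_iUnion]
  constructor
  · intro hz
    obtain ⟨n, h1, h2⟩ := exists_dyadic hz
    exact ⟨n, h1, h2⟩
  · rintro ⟨n, h1, h2⟩
    have : (4:ℝ) ≤ 4 * 2 ^ n := by
      have : (1:ℝ) ≤ 2 ^ n := one_le_pow₀ one_le_two
      linarith
    linarith

lemma decompose (f : ℂ → ℝ≥0∞) :
    ∫⁻ z in {z : ℂ | 4 < ‖z‖}, f z = ∑' n : ℕ, ∫⁻ z in A n, f z := by
  rw [unionA, lintegral_iUnion measA disjA]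

lemma fub_fst (S : Set (ℂ × ℂ)) (hS : MeasurableSet S) (f : ℂ × ℂ → ℝ≥0∞) (hf : Measurable f) :
    ∫⁻ z in S, f z = ∫⁻ x : ℂ, ∫⁻ y in {y : ℂ | (x, y) ∈ S}, f (x, y) := by
  rw [← lintegral_indicator hS, Measure.volume_eq_prod,
    lintegral_prod _ ((hf.indicator hS).aemeasurable)]
  congr 1; funext x
  rw [show {y : ℂ | (x, y) ∈ S} = Prod.mk x ⁻¹' S from rfl,
    ← lintegral_indicator (hS.preimage measurable_prodMk_left)]
  congr 1

lemma fub_snd (S : Set (ℂ × ℂ)) (hS : MeasurableSet S) (f : ℂ × ℂ → ℝ≥0∞) (hf : Measurable f) :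
    ∫⁻ z in S, f z = ∫⁻ y : ℂ, ∫⁻ x in {x : ℂ | (x, y) ∈ S}, f (x, y) := by
  rw [← lintegral_indicator hS, Measure.volume_eq_prod,
    lintegral_prod_symm _ ((hf.indicator hS).aemeasurable)]
  congr 1; funext y
  rw [show {x : ℂ | (x, y) ∈ S} = (fun x => (x, y)) ⁻¹' S from rfl,
    ← lintegral_indicator (hS.preimage (measurable_prodMk_right))]
  congr 1

def XS : Set (ℂ × ℂ) := {z | 4 < ‖z.1‖ ∧
  |‖z.2‖ - 1 / ‖z.1‖| < 1 / (‖z.1‖) ^ 3}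

def YS : Set (ℂ × ℂ) := {z | 4 < ‖z.2‖ ∧
  ‖z.1‖ < 1 / (2 * ‖z.2‖ * (Real.log (‖z.2‖) / Real.log 4))}

def ZS : Set (ℂ × ℂ) := {z | ‖z.1‖ ≤ 4 ∧ ‖z.2‖ ≤ 4}

lemma m1 : Measurable fun z : ℂ × ℂ => ‖z.1‖ :=
  continuous_norm.measurable.comp measurable_fst

lemma m2 : Measurable fun z : ℂ × ℂ => ‖z.2‖ :=
  continuous_norm.measurable.comp measurable_snd

lemma measXS : MeasurableSet XS :=
  (measurableSet_lt measurable_const m1).inter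
    (measurableSet_lt ((m2.sub (measurable_const.div m1)).abs)
      (measurable_const.div (m1.pow_const 3)))

lemma measYS : MeasurableSet YS :=
  (measurableSet_lt measurable_const m2).inter
    (measurableSet_lt m1 (measurable_const.div
      ((measurable_const.mul m2).mul ((Real.measurable_log.comp m2).div_const _))))

lemma measZS : MeasurableSet ZS :=
  (measurableSet_le m1 measurable_const).inter (measurableSet_le m2 measurable_const)

lemma measF (j k : ℕ) : Measurable fun z : ℂ × ℂ =>
    ENNReal.ofReal (‖z.1‖ ^ (2 * j) * ‖z.2‖ ^ (2 * k)) :=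
  ((m1.pow_const _).mul (m2.pow_const _)).ennreal_ofReal

lemma measIn (k : ℕ) : Measurable fun y : ℂ => ENNReal.ofReal (‖y‖ ^ (2 * k)) :=
  ((continuous_norm.measurable).pow_const _).ennreal_ofReal

/-- the `z₂`-slice of `XS` over `x` (when `4 < |x|`). -/
def TX (x : ℂ) : Set ℂ :=
  {y : ℂ | |‖y‖ - 1 / ‖x‖| < 1 / (‖x‖) ^ 3}

lemma measTX (x : ℂ) : MeasurableSet (TX x) :=
  measurableSet_lt ((continuous_norm.measurable.sub_const _).abs) measurable_const

lemma Z_finite (j k : ℕ) :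
    ∫⁻ z in ZS, ENNReal.ofReal (‖z.1‖ ^ (2 * j) * ‖z.2‖ ^ (2 * k)) < ⊤ := by
  have hb : ∀ z ∈ ZS, ENNReal.ofReal (‖z.1‖ ^ (2 * j) * ‖z.2‖ ^ (2 * k))
      ≤ ENNReal.ofReal (4 ^ (2 * j) * 4 ^ (2 * k)) := by
    intro z hz
    exact ENNReal.ofReal_le_ofReal (mul_le_mul
      (pow_le_pow_left₀ (norm_nonneg _) hz.1 _)
      (pow_le_pow_left₀ (norm_nonneg _) hz.2 _) (by positivity) (by positivity))
  have hZvol : volume ZS < ⊤ := by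
    have hset : ZS = (closedBall (0:ℂ) 4) ×ˢ (closedBall (0:ℂ) 4) := by
      ext ⟨a, b⟩
      simp [ZS, Complex.dist_eq, Set.mem_prod]
    rw [hset, Measure.volume_eq_prod, Measure.prod_prod, Complex.volume_closedBall]
    have hpi : (NNReal.pi : ℝ≥0∞) < ⊤ := ENNReal.coe_lt_top
    have h4 : (ENNReal.ofReal 4) ^ 2 < ⊤ := ENNReal.pow_lt_top ENNReal.ofReal_lt_top
    exact ENNReal.mul_lt_top (ENNReal.mul_lt_top h4 hpi) (ENNReal.mul_lt_top h4 hpi)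
  calc ∫⁻ z in ZS, ENNReal.ofReal (‖z.1‖ ^ (2 * j) * ‖z.2‖ ^ (2 * k))
      ≤ ∫⁻ _ in ZS, ENNReal.ofReal (4 ^ (2 * j) * 4 ^ (2 * k)) := setLIntegral_mono' measZS hb
    _ = ENNReal.ofReal (4 ^ (2 * j) * 4 ^ (2 * k)) * volume ZS := setLIntegral_const _ _
    _ < ⊤ := ENNReal.mul_lt_top ENNReal.ofReal_lt_top hZvol

lemma X_eq (j k : ℕ) :
    ∫⁻ z in XS, ENNReal.ofReal (‖z.1‖ ^ (2 * j) * ‖z.2‖ ^ (2 * k))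
      = ∑' n : ℕ, ∫⁻ x in A n,
          ENNReal.ofReal (‖x‖ ^ (2 * j)) *
            ∫⁻ y in TX x, ENNReal.ofReal (‖y‖ ^ (2 * k)) := by
  rw [fub_fst XS measXS _ (measF j k)]
  have hU : MeasurableSet {x : ℂ | 4 < ‖x‖} :=
    measurableSet_lt measurable_const continuous_norm.measurable
  have step1 : ∀ x : ℂ,
      (∫⁻ y in {y : ℂ | (x, y) ∈ XS},
          ENNReal.ofReal (‖x‖ ^ (2 * j) * ‖y‖ ^ (2 * k)))
        = {x : ℂ | 4 < ‖x‖}.indicator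
            (fun x => ENNReal.ofReal (‖x‖ ^ (2 * j)) *
              ∫⁻ y in TX x, ENNReal.ofReal (‖y‖ ^ (2 * k))) x := by
    intro x
    by_cases hx : 4 < ‖x‖
    · rw [Set.indicator_of_mem (show x ∈ {x : ℂ | 4 < ‖x‖} from hx)]
      have hslice : {y : ℂ | (x, y) ∈ XS} = TX x := by
        ext y; simp [XS, TX, hx]
      rw [hslice]
      have hmul : ∀ y : ℂ, ENNReal.ofReal (‖x‖ ^ (2 * j) * ‖y‖ ^ (2 * k))
          = ENNReal.ofReal (‖x‖ ^ (2 * j)) * ENNReal.ofReal (‖y‖ ^ (2 * k)) :=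
        fun y => ENNReal.ofReal_mul (by positivity)
      simp_rw [hmul]
      rw [lintegral_const_mul _ (measIn k)]
    · rw [Set.indicator_of_notMem (show x ∉ {x : ℂ | 4 < ‖x‖} from hx)]
      have hslice : {y : ℂ | (x, y) ∈ XS} = ∅ := by
        ext y
        simp only [XS, Set.mem_setOf_eq, Set.mem_empty_iff_false, iff_false, not_and]
        intro h; exact absurd h hx
      simp [hslice]
  rw [lintegral_congr step1, lintegral_indicator hU, decompose]

lemma TX_eq {x : ℂ} : TX x = {y : ℂ |
    1 / ‖x‖ - 1 / (‖x‖) ^ 3 < ‖y‖ ∧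
    ‖y‖ < 1 / ‖x‖ + 1 / (‖x‖) ^ 3} := by
  ext y
  simp only [TX, Set.mem_setOf_eq, abs_lt]
  constructor <;> rintro ⟨h1, h2⟩ <;> constructor <;> linarith

lemma realX_up (k n : ℕ) {r : ℝ} (hr : 4 * 2 ^ n < r) :
    r ^ (2 * k) * ((1 / r + 1 / r ^ 3) ^ (2 * k) *
        (Real.pi * ((1 / r + 1 / r ^ 3) ^ 2 - (1 / r - 1 / r ^ 3) ^ 2)))
      ≤ 2 ^ (2 * k) * (4 * Real.pi / (4 * 2 ^ n) ^ 4) := by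
  have h2n : (1:ℝ) ≤ 2 ^ n := one_le_pow₀ one_le_two
  have hr4 : (4:ℝ) < r := by nlinarith
  have hr0 : (0:ℝ) < r := by linarith
  have h4 : (1 / r + 1 / r ^ 3) ^ 2 - (1 / r - 1 / r ^ 3) ^ 2 = 4 / r ^ 4 := by
    field_simp; ring
  have key1 : r * (1 / r + 1 / r ^ 3) = 1 + 1 / r ^ 2 := by field_simp
  have h1 : r ^ (2 * k) * (1 / r + 1 / r ^ 3) ^ (2 * k) = (1 + 1 / r ^ 2) ^ (2 * k) := by
    rw [← mul_pow, key1]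
  have h2 : (1:ℝ) + 1 / r ^ 2 ≤ 2 := by
    have : 1 / r ^ 2 ≤ 1 := by rw [div_le_one (by positivity)]; nlinarith
    linarith
  have h3 : ((1:ℝ) + 1 / r ^ 2) ^ (2 * k) ≤ 2 ^ (2 * k) := pow_le_pow_left₀ (by positivity) h2 _
  have h5 : Real.pi * (4 / r ^ 4) ≤ 4 * Real.pi / (4 * 2 ^ n) ^ 4 := by
    rw [show Real.pi * (4 / r ^ 4) = 4 * Real.pi / r ^ 4 by ring]
    gcongr
  calc r ^ (2 * k) * ((1 / r + 1 / r ^ 3) ^ (2 * k) *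
        (Real.pi * ((1 / r + 1 / r ^ 3) ^ 2 - (1 / r - 1 / r ^ 3) ^ 2)))
      = (r ^ (2 * k) * (1 / r + 1 / r ^ 3) ^ (2 * k)) * (Real.pi * (4 / r ^ 4)) := by
        rw [h4]; ring
    _ = (1 + 1 / r ^ 2) ^ (2 * k) * (Real.pi * (4 / r ^ 4)) := by rw [h1]
    _ ≤ 2 ^ (2 * k) * (4 * Real.pi / (4 * 2 ^ n) ^ 4) :=
        mul_le_mul h3 h5 (by positivity) (by positivity)

lemma X_finite (k : ℕ) :
    ∫⁻ z in XS, ENNReal.ofReal (‖z.1‖ ^ (2 * k) * ‖z.2‖ ^ (2 * k)) < ⊤ := by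
  rw [X_eq k k]
  set C : ℝ := 2 ^ (2 * k) * 3 * Real.pi ^ 2 with hC
  have hterm : ∀ n : ℕ,
      (∫⁻ x in A n, ENNReal.ofReal (‖x‖ ^ (2 * k)) *
        ∫⁻ y in TX x, ENNReal.ofReal (‖y‖ ^ (2 * k)))
      ≤ ENNReal.ofReal (C * (1 / 4) ^ n) := by
    intro n
    have h2n : (1:ℝ) ≤ 2 ^ n := one_le_pow₀ one_le_two
    have hpt : ∀ x ∈ A n, ENNReal.ofReal (‖x‖ ^ (2 * k)) *
        (∫⁻ y in TX x, ENNReal.ofReal (‖y‖ ^ (2 * k)))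
        ≤ ENNReal.ofReal (2 ^ (2 * k) * (4 * Real.pi / (4 * 2 ^ n) ^ 4)) := by
      intro x hx
      set r := ‖x‖ with hr
      have hrn : 4 * 2 ^ n < r := hx.1
      have hr4 : (4:ℝ) < r := by nlinarith
      have hr0 : (0:ℝ) < r := by linarith
      have hae : (0:ℝ) ≤ 1 / r - 1 / r ^ 3 := by
        rw [sub_nonneg, div_le_div_iff₀ (by positivity) (by positivity)]
        nlinarith [mul_pos (mul_pos hr0 (by linarith : (0:ℝ) < r - 1))
          (by linarith : (0:ℝ) < r + 1)]
      have hlt : 1 / r - 1 / r ^ 3 < 1 / r + 1 / r ^ 3 := by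
        have : (0:ℝ) < 1 / r ^ 3 := by positivity
        linarith
      have hvol : volume (TX x) = ENNReal.ofReal (Real.pi *
          ((1 / r + 1 / r ^ 3) ^ 2 - (1 / r - 1 / r ^ 3) ^ 2)) := by
        rw [TX_eq, vol_oo hae hlt]
      have hin : (∫⁻ y in TX x, ENNReal.ofReal (‖y‖ ^ (2 * k)))
          ≤ ENNReal.ofReal ((1 / r + 1 / r ^ 3) ^ (2 * k)) * volume (TX x) := by
        rw [← setLIntegral_const (TX x) _]
        refine setLIntegral_mono' (measTX x) fun y hy => ?_
        rw [TX_eq] at hy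
        exact ENNReal.ofReal_le_ofReal (pow_le_pow_left₀ (norm_nonneg _) hy.2.le _)
      calc ENNReal.ofReal (‖x‖ ^ (2 * k)) *
            (∫⁻ y in TX x, ENNReal.ofReal (‖y‖ ^ (2 * k)))
          ≤ ENNReal.ofReal (r ^ (2 * k)) *
            (ENNReal.ofReal ((1 / r + 1 / r ^ 3) ^ (2 * k)) * volume (TX x)) :=
            mul_le_mul' le_rfl hin
        _ = ENNReal.ofReal (r ^ (2 * k) * ((1 / r + 1 / r ^ 3) ^ (2 * k) *
              (Real.pi * ((1 / r + 1 / r ^ 3) ^ 2 - (1 / r - 1 / r ^ 3) ^ 2)))) := by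
            rw [hvol, ← ENNReal.ofReal_mul (by positivity), ← ENNReal.ofReal_mul (by positivity)]
        _ ≤ ENNReal.ofReal (2 ^ (2 * k) * (4 * Real.pi / (4 * 2 ^ n) ^ 4)) :=
            ENNReal.ofReal_le_ofReal (realX_up k n hrn)
    calc (∫⁻ x in A n, ENNReal.ofReal (‖x‖ ^ (2 * k)) *
          ∫⁻ y in TX x, ENNReal.ofReal (‖y‖ ^ (2 * k)))
        ≤ ∫⁻ _ in A n, ENNReal.ofReal (2 ^ (2 * k) * (4 * Real.pi / (4 * 2 ^ n) ^ 4)) :=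
          setLIntegral_mono' (measA n) hpt
      _ = ENNReal.ofReal (2 ^ (2 * k) * (4 * Real.pi / (4 * 2 ^ n) ^ 4)) * volume (A n) :=
          setLIntegral_const _ _
      _ ≤ ENNReal.ofReal (C * (1 / 4) ^ n) := by
          rw [volA, ← ENNReal.ofReal_mul (by positivity)]
          apply ENNReal.ofReal_le_ofReal
          have h16 : ((2:ℝ) ^ n) ^ 4 = 16 ^ n := by
            rw [← pow_mul, mul_comm, pow_mul]; norm_num
          have hq : (16:ℝ) ^ n = 4 ^ n * 4 ^ n := by rw [← mul_pow]; norm_num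
          have hinv : ((1:ℝ) / 4) ^ n = 1 / 4 ^ n := by rw [div_pow, one_pow]
          have h4pos : (0:ℝ) < 4 ^ n := by positivity
          have hden : ((4:ℝ) * 2 ^ n) ^ 4 = 256 * (4 ^ n * 4 ^ n) := by
            rw [mul_pow, h16, hq]; norm_num
          rw [hden, hinv, hC]
          have hkey : (2:ℝ) ^ (2 * k) * (4 * Real.pi / (256 * (4 ^ n * 4 ^ n))) *
              (Real.pi * (48 * 4 ^ n)) = (2 ^ (2 * k) * Real.pi ^ 2 * (3 / 4)) * (1 / 4 ^ n) := by
            field_simp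
            ring
          rw [hkey]
          have ht : (0:ℝ) < 2 ^ (2 * k) * Real.pi ^ 2 := by positivity
          apply mul_le_mul_of_nonneg_right _ (by positivity)
          nlinarith [ht]
  have hsum : (∑' n : ℕ, ENNReal.ofReal (C * (1 / 4) ^ n)) < ⊤ := by
    rw [← ENNReal.ofReal_tsum_of_nonneg (fun n => by positivity)
      ((summable_geometric_of_lt_one (by norm_num) (by norm_num)).mul_left C)]
    exact ENNReal.ofReal_lt_top
  exact lt_of_le_of_lt (ENNReal.tsum_le_tsum hterm) hsum

lemma realX_low (j k n : ℕ) (hkj : k < j) {r : ℝ} (hrn : 4 * 2 ^ n < r)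
    (hrN : r ≤ 4 * 2 ^ (n + 1)) :
    (15 / 16 : ℝ) ^ (2 * k) * (4 * Real.pi) / (4 * 2 ^ (n + 1)) ^ 2
      ≤ r ^ (2 * j) * ((1 / r - 1 / r ^ 3) ^ (2 * k) *
          (Real.pi * ((1 / r + 1 / r ^ 3) ^ 2 - (1 / r - 1 / r ^ 3) ^ 2))) := by
  have h2n : (1:ℝ) ≤ 2 ^ n := one_le_pow₀ one_le_two
  have hr4 : (4:ℝ) < r := by nlinarith
  have hr0 : (0:ℝ) < r := by linarith
  have hr1 : (1:ℝ) ≤ r := by linarith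
  have h4 : (1 / r + 1 / r ^ 3) ^ 2 - (1 / r - 1 / r ^ 3) ^ 2 = 4 / r ^ 4 := by
    field_simp; ring
  have h16r : 1 / r ^ 3 ≤ 1 / 16 * (1 / r) := by
    rw [show (1:ℝ) / 16 * (1 / r) = 1 / (16 * r) by ring]
    rw [div_le_div_iff₀ (by positivity) (by positivity)]
    nlinarith [mul_pos (mul_pos hr0 (by linarith : (0:ℝ) < r - 4))
      (by linarith : (0:ℝ) < r + 4)]
  have hB : (15 / 16 : ℝ) * (1 / r) ≤ 1 / r - 1 / r ^ 3 := by linarith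
  have hBpow : ((15 / 16 : ℝ) * (1 / r)) ^ (2 * k) ≤ (1 / r - 1 / r ^ 3) ^ (2 * k) :=
    pow_le_pow_left₀ (by positivity) hB _
  have hApow : r ^ (2 * k + 2) ≤ r ^ (2 * j) := pow_le_pow_right₀ hr1 (by omega)
  have hid : r ^ (2 * k + 2) * (((15 / 16 : ℝ) * (1 / r)) ^ (2 * k) * (Real.pi * (4 / r ^ 4)))
      = (15 / 16 : ℝ) ^ (2 * k) * (4 * Real.pi) / r ^ 2 := by
    rw [mul_pow, pow_add]
    have hrk : (r : ℝ) ^ (2 * k) ≠ 0 := pow_ne_zero _ hr0.ne'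
    field_simp
    ring_nf
    rw [← mul_pow, mul_inv_cancel₀ hr0.ne', one_pow]
  have hfinal : (15 / 16 : ℝ) ^ (2 * k) * (4 * Real.pi) / (4 * 2 ^ (n + 1)) ^ 2
      ≤ (15 / 16 : ℝ) ^ (2 * k) * (4 * Real.pi) / r ^ 2 := by
    gcongr
  calc (15 / 16 : ℝ) ^ (2 * k) * (4 * Real.pi) / (4 * 2 ^ (n + 1)) ^ 2
      ≤ (15 / 16 : ℝ) ^ (2 * k) * (4 * Real.pi) / r ^ 2 := hfinal
    _ = r ^ (2 * k + 2) * (((15 / 16 : ℝ) * (1 / r)) ^ (2 * k) * (Real.pi * (4 / r ^ 4))) :=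
        hid.symm
    _ ≤ r ^ (2 * j) * ((1 / r - 1 / r ^ 3) ^ (2 * k) * (Real.pi * (4 / r ^ 4))) := by
        refine mul_le_mul hApow (mul_le_mul_of_nonneg_right hBpow (by positivity))
          (by positivity) (by positivity)
    _ = r ^ (2 * j) * ((1 / r - 1 / r ^ 3) ^ (2 * k) *
          (Real.pi * ((1 / r + 1 / r ^ 3) ^ 2 - (1 / r - 1 / r ^ 3) ^ 2))) := by rw [h4]

lemma X_infinite (j k : ℕ) (hkj : k < j) :
    ∫⁻ z in XS, ENNReal.ofReal (‖z.1‖ ^ (2 * j) * ‖z.2‖ ^ (2 * k)) = ⊤ := by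
  rw [X_eq j k]
  set δ : ℝ≥0∞ := ENNReal.ofReal ((15 / 16 : ℝ) ^ (2 * k) * 3 * Real.pi ^ 2) with hδ
  have hterm : ∀ n : ℕ, δ ≤ ∫⁻ x in A n,
      ENNReal.ofReal (‖x‖ ^ (2 * j)) *
        ∫⁻ y in TX x, ENNReal.ofReal (‖y‖ ^ (2 * k)) := by
    intro n
    have h2n : (1:ℝ) ≤ 2 ^ n := one_le_pow₀ one_le_two
    set L : ℝ := (15 / 16 : ℝ) ^ (2 * k) * (4 * Real.pi) / (4 * 2 ^ (n + 1)) ^ 2 with hL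
    have hpt : ∀ x ∈ A n, ENNReal.ofReal L ≤
        ENNReal.ofReal (‖x‖ ^ (2 * j)) *
          ∫⁻ y in TX x, ENNReal.ofReal (‖y‖ ^ (2 * k)) := by
      intro x hx
      set r := ‖x‖ with hrdef
      have hrn : 4 * 2 ^ n < r := hx.1
      have hrN : r ≤ 4 * 2 ^ (n + 1) := hx.2
      have hr4 : (4:ℝ) < r := by nlinarith
      have hr0 : (0:ℝ) < r := by linarith
      have hae : (0:ℝ) ≤ 1 / r - 1 / r ^ 3 := by
        rw [sub_nonneg, div_le_div_iff₀ (by positivity) (by positivity)]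
        nlinarith [mul_pos (mul_pos hr0 (by linarith : (0:ℝ) < r - 1))
          (by linarith : (0:ℝ) < r + 1)]
      have hlt : 1 / r - 1 / r ^ 3 < 1 / r + 1 / r ^ 3 := by
        have : (0:ℝ) < 1 / r ^ 3 := by positivity
        linarith
      have hvol : volume (TX x) = ENNReal.ofReal (Real.pi *
          ((1 / r + 1 / r ^ 3) ^ 2 - (1 / r - 1 / r ^ 3) ^ 2)) := by
        rw [TX_eq, vol_oo hae hlt]
      have hin : ENNReal.ofReal ((1 / r - 1 / r ^ 3) ^ (2 * k)) * volume (TX x)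
          ≤ ∫⁻ y in TX x, ENNReal.ofReal (‖y‖ ^ (2 * k)) := by
        rw [← setLIntegral_const (TX x) _]
        refine setLIntegral_mono' (measTX x) fun y hy => ?_
        rw [TX_eq] at hy
        exact ENNReal.ofReal_le_ofReal (pow_le_pow_left₀ hae hy.1.le _)
      calc ENNReal.ofReal L
          ≤ ENNReal.ofReal (r ^ (2 * j) * ((1 / r - 1 / r ^ 3) ^ (2 * k) *
              (Real.pi * ((1 / r + 1 / r ^ 3) ^ 2 - (1 / r - 1 / r ^ 3) ^ 2)))) :=
            ENNReal.ofReal_le_ofReal (realX_low j k n hkj hrn hrN)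
        _ = ENNReal.ofReal (r ^ (2 * j)) *
              (ENNReal.ofReal ((1 / r - 1 / r ^ 3) ^ (2 * k)) * volume (TX x)) := by
            rw [hvol, ← ENNReal.ofReal_mul (by positivity), ← ENNReal.ofReal_mul (by positivity)]
        _ ≤ ENNReal.ofReal (r ^ (2 * j)) *
              ∫⁻ y in TX x, ENNReal.ofReal (‖y‖ ^ (2 * k)) :=
            mul_le_mul' le_rfl hin
    calc δ = ENNReal.ofReal L * volume (A n) := by
          rw [volA, hδ, hL, ← ENNReal.ofReal_mul (by positivity)]
          congr 1
          have h2sq : ((2:ℝ) ^ n) ^ 2 = 4 ^ n := by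
            rw [← pow_mul, mul_comm, pow_mul]; norm_num
          have hden : ((4:ℝ) * 2 ^ (n + 1)) ^ 2 = 64 * 4 ^ n := by
            rw [← h2sq]; ring
          rw [hden]
          have h4pos : (0:ℝ) < 4 ^ n := by positivity
          field_simp
          ring
      _ ≤ ∫⁻ _ in A n, ENNReal.ofReal L := by rw [setLIntegral_const]
      _ ≤ _ := setLIntegral_mono' (measA n) hpt
  have hδ0 : δ ≠ 0 := by
    rw [hδ]
    exact (ENNReal.ofReal_pos.mpr (by positivity)).ne'
  have htop := ENNReal.tsum_const_eq_top_of_ne_zero (α := ℕ) (c := δ) hδ0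
  exact top_le_iff.mp (le_trans (le_of_eq htop.symm) (ENNReal.tsum_le_tsum hterm))

/-- radius of the `z₁`-slice of `YS`. -/
noncomputable def rho (y : ℂ) : ℝ :=
  1 / (2 * ‖y‖ * (Real.log (‖y‖) / Real.log 4))

lemma vol_ball (ρ : ℝ) (h : 0 ≤ ρ) :
    volume (Metric.ball (0:ℂ) ρ) = ENNReal.ofReal (ρ ^ 2 * Real.pi) := by
  rw [Complex.volume_ball, ← ENNReal.ofReal_pow h, ← ENNReal.ofReal_coe_nnreal,
    NNReal.coe_real_pi, ← ENNReal.ofReal_mul (by positivity)]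

lemma Y_eq (j k : ℕ) :
    ∫⁻ z in YS, ENNReal.ofReal (‖z.1‖ ^ (2 * j) * ‖z.2‖ ^ (2 * k))
      = ∑' n : ℕ, ∫⁻ y in A n,
          ENNReal.ofReal (‖y‖ ^ (2 * k)) *
            ∫⁻ x in Metric.ball (0:ℂ) (rho y), ENNReal.ofReal (‖x‖ ^ (2 * j)) := by
  rw [fub_snd YS measYS _ (measF j k)]
  have hU : MeasurableSet {y : ℂ | 4 < ‖y‖} :=
    measurableSet_lt measurable_const continuous_norm.measurable
  have step1 : ∀ y : ℂ,
      (∫⁻ x in {x : ℂ | (x, y) ∈ YS},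
          ENNReal.ofReal (‖x‖ ^ (2 * j) * ‖y‖ ^ (2 * k)))
        = {y : ℂ | 4 < ‖y‖}.indicator
            (fun y => ENNReal.ofReal (‖y‖ ^ (2 * k)) *
              ∫⁻ x in Metric.ball (0:ℂ) (rho y),
                ENNReal.ofReal (‖x‖ ^ (2 * j))) y := by
    intro y
    by_cases hy : 4 < ‖y‖
    · rw [Set.indicator_of_mem (show y ∈ {y : ℂ | 4 < ‖y‖} from hy)]
      have hslice : {x : ℂ | (x, y) ∈ YS} = Metric.ball (0:ℂ) (rho y) := by
        ext x
        simp [YS, rho, hy, Metric.mem_ball, Complex.dist_eq]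
      rw [hslice]
      have hmul : ∀ x : ℂ, ENNReal.ofReal (‖x‖ ^ (2 * j) * ‖y‖ ^ (2 * k))
          = ENNReal.ofReal (‖y‖ ^ (2 * k)) * ENNReal.ofReal (‖x‖ ^ (2 * j)) :=
        fun x => by rw [mul_comm, ENNReal.ofReal_mul (by positivity)]
      simp_rw [hmul]
      rw [lintegral_const_mul _ (measIn j)]
    · rw [Set.indicator_of_notMem (show y ∉ {y : ℂ | 4 < ‖y‖} from hy)]
      have hslice : {x : ℂ | (x, y) ∈ YS} = ∅ := by
        ext x
        simp only [YS, Set.mem_setOf_eq, Set.mem_empty_iff_false, iff_false, not_and]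
        intro h; exact absurd h hy
      simp [hslice]
  rw [lintegral_congr step1, lintegral_indicator hU, decompose]

lemma log_facts {s : ℝ} (hs : 4 < s) :
    1 < Real.log s / Real.log 4 := by
  have hlog4 : (0:ℝ) < Real.log 4 := Real.log_pos (by norm_num)
  rw [lt_div_iff₀ hlog4, one_mul]
  exact Real.log_lt_log (by norm_num) hs

lemma L_lower {s : ℝ} (n : ℕ) (hs : 4 * 2 ^ n < s) :
    ((n:ℝ) + 2) / 2 < Real.log s / Real.log 4 := by
  have hl2 : (0:ℝ) < Real.log 2 := Real.log_pos one_lt_two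
  have hlog2 : Real.log 4 = 2 * Real.log 2 := by
    rw [show (4:ℝ) = 2 ^ 2 by norm_num, Real.log_pow]; push_cast; ring
  have hs4n : Real.log (4 * 2 ^ n) = Real.log 4 + n * Real.log 2 := by
    rw [Real.log_mul (by norm_num) (by positivity), Real.log_pow]
  have h2 : Real.log (4 * 2 ^ n) / Real.log 4 = ((n:ℝ) + 2) / 2 := by
    rw [hs4n, hlog2]; field_simp; ring
  have h1 : Real.log (4 * 2 ^ n) < Real.log s := Real.log_lt_log (by positivity) hs
  rw [← h2]
  have hlog4 : (0:ℝ) < Real.log 4 := Real.log_pos (by norm_num)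
  gcongr

lemma L_upper {s : ℝ} (n : ℕ) (hs0 : 0 < s) (hsN : s ≤ 4 * 2 ^ (n + 1)) :
    Real.log s / Real.log 4 ≤ (n:ℝ) + 3 := by
  have hl2 : (0:ℝ) < Real.log 2 := Real.log_pos one_lt_two
  have hlog2 : Real.log 4 = 2 * Real.log 2 := by
    rw [show (4:ℝ) = 2 ^ 2 by norm_num, Real.log_pow]; push_cast; ring
  have hs4n : Real.log (4 * 2 ^ (n + 1)) = Real.log 4 + (n + 1) * Real.log 2 := by
    rw [Real.log_mul (by norm_num) (by positivity), Real.log_pow]; push_cast; ring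
  have h1 : Real.log s ≤ Real.log (4 * 2 ^ (n + 1)) := Real.log_le_log hs0 hsN
  have hlog4 : (0:ℝ) < Real.log 4 := Real.log_pos (by norm_num)
  rw [div_le_iff₀ hlog4]
  calc Real.log s ≤ Real.log 4 + (n + 1) * Real.log 2 := by rw [← hs4n]; exact h1
    _ ≤ ((n:ℝ) + 3) * Real.log 4 := by rw [hlog2]; nlinarith

lemma realY_up (k n : ℕ) {s L : ℝ} (hsn : 4 * 2 ^ n < s) (hL1 : 1 < L)
    (hLn : ((n:ℝ) + 2) / 2 < L) :
    s ^ (2 * k) * ((1 / (2 * s * L)) ^ (2 * k) * ((1 / (2 * s * L)) ^ 2 * Real.pi))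
      ≤ Real.pi / (4 * (4 * 2 ^ n) ^ 2 * (((n:ℝ) + 2) / 2) ^ 2) := by
  have h2n : (1:ℝ) ≤ 2 ^ n := one_le_pow₀ one_le_two
  have hs0 : (0:ℝ) < s := by nlinarith
  have hL0 : (0:ℝ) < L := by linarith
  have key : s * (1 / (2 * s * L)) = 1 / (2 * L) := by field_simp
  have h1 : s ^ (2 * k) * (1 / (2 * s * L)) ^ (2 * k) = (1 / (2 * L)) ^ (2 * k) := by
    rw [← mul_pow, key]
  have h2 : ((1:ℝ) / (2 * L)) ^ (2 * k) ≤ 1 :=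
    pow_le_one₀ (by positivity) (by rw [div_le_one (by positivity)]; linarith)
  have h3 : ((1:ℝ) / (2 * s * L)) ^ 2 * Real.pi = Real.pi / (4 * s ^ 2 * L ^ 2) := by
    rw [div_pow, one_pow]
    rw [show (2 * s * L) ^ 2 = 4 * s ^ 2 * L ^ 2 by ring]
    ring
  have h4 : Real.pi / (4 * s ^ 2 * L ^ 2)
      ≤ Real.pi / (4 * (4 * 2 ^ n) ^ 2 * (((n:ℝ) + 2) / 2) ^ 2) := by
    gcongr
  calc s ^ (2 * k) * ((1 / (2 * s * L)) ^ (2 * k) * ((1 / (2 * s * L)) ^ 2 * Real.pi))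
      = (s ^ (2 * k) * (1 / (2 * s * L)) ^ (2 * k)) * ((1 / (2 * s * L)) ^ 2 * Real.pi) := by
        ring
    _ = (1 / (2 * L)) ^ (2 * k) * (Real.pi / (4 * s ^ 2 * L ^ 2)) := by rw [h1, h3]
    _ ≤ 1 * (Real.pi / (4 * (4 * 2 ^ n) ^ 2 * (((n:ℝ) + 2) / 2) ^ 2)) :=
        mul_le_mul h2 h4 (by positivity) (by norm_num)
    _ = Real.pi / (4 * (4 * 2 ^ n) ^ 2 * (((n:ℝ) + 2) / 2) ^ 2) := one_mul _

lemma Y_finite (k : ℕ) :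
    ∫⁻ z in YS, ENNReal.ofReal (‖z.1‖ ^ (2 * k) * ‖z.2‖ ^ (2 * k)) < ⊤ := by
  rw [Y_eq k k]
  have hterm : ∀ n : ℕ,
      (∫⁻ y in A n, ENNReal.ofReal (‖y‖ ^ (2 * k)) *
        ∫⁻ x in Metric.ball (0:ℂ) (rho y), ENNReal.ofReal (‖x‖ ^ (2 * k)))
      ≤ ENNReal.ofReal (3 * Real.pi ^ 2 * (1 / ((n:ℝ) + 2) ^ 2)) := by
    intro n
    have h2n : (1:ℝ) ≤ 2 ^ n := one_le_pow₀ one_le_two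
    set B : ℝ := Real.pi / (4 * (4 * 2 ^ n) ^ 2 * (((n:ℝ) + 2) / 2) ^ 2) with hB
    have hpt : ∀ y ∈ A n, ENNReal.ofReal (‖y‖ ^ (2 * k)) *
        (∫⁻ x in Metric.ball (0:ℂ) (rho y), ENNReal.ofReal (‖x‖ ^ (2 * k)))
        ≤ ENNReal.ofReal B := by
      intro y hy
      set s := ‖y‖ with hsdef
      set L := Real.log s / Real.log 4 with hLdef
      have hsn : 4 * 2 ^ n < s := hy.1
      have hs4 : (4:ℝ) < s := by nlinarith
      have hs0 : (0:ℝ) < s := by linarith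
      have hL1 : 1 < L := log_facts hs4
      have hLn : ((n:ℝ) + 2) / 2 < L := L_lower n hsn
      have hρ : rho y = 1 / (2 * s * L) := rfl
      have hρ0 : 0 ≤ rho y := by rw [hρ]; positivity
      have hvol : volume (Metric.ball (0:ℂ) (rho y))
          = ENNReal.ofReal ((1 / (2 * s * L)) ^ 2 * Real.pi) := by
        rw [vol_ball _ hρ0, hρ]
      have hin : (∫⁻ x in Metric.ball (0:ℂ) (rho y), ENNReal.ofReal (‖x‖ ^ (2 * k)))
          ≤ ENNReal.ofReal ((1 / (2 * s * L)) ^ (2 * k)) * volume (Metric.ball (0:ℂ) (rho y)) := by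
        rw [← setLIntegral_const (Metric.ball (0:ℂ) (rho y)) _]
        refine setLIntegral_mono' measurableSet_ball fun x hx => ?_
        rw [Metric.mem_ball, Complex.dist_eq, sub_zero] at hx
        rw [hρ] at hx
        exact ENNReal.ofReal_le_ofReal (pow_le_pow_left₀ (norm_nonneg _) hx.le _)
      calc ENNReal.ofReal (‖y‖ ^ (2 * k)) *
            (∫⁻ x in Metric.ball (0:ℂ) (rho y), ENNReal.ofReal (‖x‖ ^ (2 * k)))
          ≤ ENNReal.ofReal (s ^ (2 * k)) *
            (ENNReal.ofReal ((1 / (2 * s * L)) ^ (2 * k)) * volume (Metric.ball (0:ℂ) (rho y))) :=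
            mul_le_mul' le_rfl hin
        _ = ENNReal.ofReal (s ^ (2 * k) * ((1 / (2 * s * L)) ^ (2 * k) *
              ((1 / (2 * s * L)) ^ 2 * Real.pi))) := by
            rw [hvol, ← ENNReal.ofReal_mul (by positivity), ← ENNReal.ofReal_mul (by positivity)]
        _ ≤ ENNReal.ofReal B := ENNReal.ofReal_le_ofReal (realY_up k n hsn hL1 hLn)
    calc (∫⁻ y in A n, ENNReal.ofReal (‖y‖ ^ (2 * k)) *
          ∫⁻ x in Metric.ball (0:ℂ) (rho y), ENNReal.ofReal (‖x‖ ^ (2 * k)))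
        ≤ ∫⁻ _ in A n, ENNReal.ofReal B := setLIntegral_mono' (measA n) hpt
      _ = ENNReal.ofReal B * volume (A n) := setLIntegral_const _ _
      _ ≤ ENNReal.ofReal (3 * Real.pi ^ 2 * (1 / ((n:ℝ) + 2) ^ 2)) := by
          rw [volA, ← ENNReal.ofReal_mul (by positivity)]
          apply ENNReal.ofReal_le_ofReal
          have h2sq : ((2:ℝ) ^ n) ^ 2 = 4 ^ n := by
            rw [← pow_mul, mul_comm, pow_mul]; norm_num
          have h4pos : (0:ℝ) < 4 ^ n := by positivity
          have hn2 : (0:ℝ) < (n:ℝ) + 2 := by positivity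
          have hkey : B * (Real.pi * (48 * 4 ^ n)) = 3 * Real.pi ^ 2 * (1 / ((n:ℝ) + 2) ^ 2) := by
            rw [hB, mul_pow, h2sq]
            field_simp
            ring
          rw [hkey]
  have hsum2 : Summable (fun n : ℕ => 3 * Real.pi ^ 2 * (1 / ((n:ℝ) + 2) ^ 2)) := by
    have h0 : Summable (fun n : ℕ => 1 / (n:ℝ) ^ 2) := Real.summable_one_div_nat_pow.mpr one_lt_two
    have h1 : Summable (fun n : ℕ => 1 / ((n:ℝ) + 2) ^ 2) := by
      have := (_root_.summable_nat_add_iff 2).mpr h0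
      refine this.congr fun n => ?_
      push_cast
      ring
    exact h1.mul_left _
  have hsum : (∑' n : ℕ, ENNReal.ofReal (3 * Real.pi ^ 2 * (1 / ((n:ℝ) + 2) ^ 2))) < ⊤ := by
    rw [← ENNReal.ofReal_tsum_of_nonneg (fun n => by positivity) hsum2]
    exact ENNReal.ofReal_lt_top
  exact lt_of_le_of_lt (ENNReal.tsum_le_tsum hterm) hsum

lemma realY_low (j k n : ℕ) (hjk : j < k) {s L : ℝ} (hsn : 4 * 2 ^ n < s)
    (hL1 : 1 < L) (hLn : L ≤ (n:ℝ) + 3) :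
    3 * Real.pi / 16 * (1 / 16) ^ j * (1 / ((n:ℝ) + 3) ^ (2 * j + 2))
      ≤ s ^ (2 * k) * ((1 / (2 * s * L) / 2) ^ (2 * j) *
          (Real.pi * ((1 / (2 * s * L)) ^ 2 - (1 / (2 * s * L) / 2) ^ 2))) := by
  have h2n : (1:ℝ) ≤ 2 ^ n := one_le_pow₀ one_le_two
  have hs4 : (4:ℝ) < s := by nlinarith
  have hs0 : (0:ℝ) < s := by linarith
  have hs1 : (1:ℝ) ≤ s := by linarith
  have hL0 : (0:ℝ) < L := by linarith
  have idA : 1 / (2 * s * L) / 2 = 1 / (4 * s * L) := by ring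
  have idB : (1 / (2 * s * L)) ^ 2 - (1 / (4 * s * L)) ^ 2 = 3 / (16 * s ^ 2 * L ^ 2) := by
    field_simp; ring
  have idM : s ^ (2 * j + 2) * ((1 / (4 * s * L)) ^ (2 * j) *
      (Real.pi * (3 / (16 * s ^ 2 * L ^ 2))))
      = 3 * Real.pi / 16 * (1 / 16) ^ j * (1 / L ^ (2 * j + 2)) := by
    have e0 : ((4:ℝ) * s * L) ^ (2 * j) = 16 ^ j * (s ^ (2 * j) * L ^ (2 * j)) := by
      rw [mul_pow, mul_pow, show ((4:ℝ)) ^ (2 * j) = 16 ^ j by rw [pow_mul]; norm_num]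
      ring
    have hsj : (s:ℝ) ^ (2 * j) ≠ 0 := by positivity
    have hLj : (L:ℝ) ^ (2 * j) ≠ 0 := by positivity
    rw [div_pow (1:ℝ) (4 * s * L), one_pow, e0, pow_add, pow_add]
    field_simp
    ring_nf
    rw [← mul_pow]; norm_num
  have hA : s ^ (2 * j + 2) ≤ s ^ (2 * k) := pow_le_pow_right₀ hs1 (by omega)
  have hLpow : L ^ (2 * j + 2) ≤ ((n:ℝ) + 3) ^ (2 * j + 2) := pow_le_pow_left₀ hL0.le hLn _
  have hdiv : 1 / ((n:ℝ) + 3) ^ (2 * j + 2) ≤ 1 / L ^ (2 * j + 2) :=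
    one_div_le_one_div_of_le (by positivity) hLpow
  calc 3 * Real.pi / 16 * (1 / 16) ^ j * (1 / ((n:ℝ) + 3) ^ (2 * j + 2))
      ≤ 3 * Real.pi / 16 * (1 / 16) ^ j * (1 / L ^ (2 * j + 2)) := by
        apply mul_le_mul_of_nonneg_left hdiv (by positivity)
    _ = s ^ (2 * j + 2) * ((1 / (4 * s * L)) ^ (2 * j) *
          (Real.pi * (3 / (16 * s ^ 2 * L ^ 2)))) := idM.symm
    _ ≤ s ^ (2 * k) * ((1 / (4 * s * L)) ^ (2 * j) *
          (Real.pi * (3 / (16 * s ^ 2 * L ^ 2)))) :=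
        mul_le_mul_of_nonneg_right hA (by positivity)
    _ = s ^ (2 * k) * ((1 / (2 * s * L) / 2) ^ (2 * j) *
          (Real.pi * ((1 / (2 * s * L)) ^ 2 - (1 / (2 * s * L) / 2) ^ 2))) := by
        rw [idA, idB]

lemma Y_infinite (j k : ℕ) (hjk : j < k) :
    ∫⁻ z in YS, ENNReal.ofReal (‖z.1‖ ^ (2 * j) * ‖z.2‖ ^ (2 * k)) = ⊤ := by
  rw [Y_eq j k]
  set c : ℝ := 3 * Real.pi / 16 * (1 / 16) ^ j with hc
  have hc0 : 0 < c := by rw [hc]; positivity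
  set u : ℕ → ℝ := fun n => c * (1 / ((n:ℝ) + 3) ^ (2 * j + 2)) * (Real.pi * (48 * 4 ^ n))
    with hu
  have hterm : ∀ n : ℕ, ENNReal.ofReal (u n) ≤ ∫⁻ y in A n,
      ENNReal.ofReal (‖y‖ ^ (2 * k)) *
        ∫⁻ x in Metric.ball (0:ℂ) (rho y), ENNReal.ofReal (‖x‖ ^ (2 * j)) := by
    intro n
    have h2n : (1:ℝ) ≤ 2 ^ n := one_le_pow₀ one_le_two
    set Lo : ℝ := c * (1 / ((n:ℝ) + 3) ^ (2 * j + 2)) with hLo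
    have hpt : ∀ y ∈ A n, ENNReal.ofReal Lo ≤
        ENNReal.ofReal (‖y‖ ^ (2 * k)) *
          ∫⁻ x in Metric.ball (0:ℂ) (rho y), ENNReal.ofReal (‖x‖ ^ (2 * j)) := by
      intro y hy
      set s := ‖y‖ with hsdef
      set L := Real.log s / Real.log 4 with hLdef
      have hsn : 4 * 2 ^ n < s := hy.1
      have hsN : s ≤ 4 * 2 ^ (n + 1) := hy.2
      have hs4 : (4:ℝ) < s := by nlinarith
      have hs0 : (0:ℝ) < s := by linarith
      have hL1 : 1 < L := log_facts hs4
      have hLn : L ≤ (n:ℝ) + 3 := L_upper n hs0 hsN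
      have hρ : rho y = 1 / (2 * s * L) := rfl
      have hρ0 : 0 < rho y := by rw [hρ]; positivity
      set W : Set ℂ := {x : ℂ | rho y / 2 < ‖x‖ ∧ ‖x‖ < rho y} with hW
      have measW : MeasurableSet W :=
        (measurableSet_lt measurable_const continuous_norm.measurable).inter
          (measurableSet_lt continuous_norm.measurable measurable_const)
      have hWsub : W ⊆ Metric.ball (0:ℂ) (rho y) := fun x hx => by
        rw [Metric.mem_ball, Complex.dist_eq, sub_zero]; exact hx.2
      have hvolW : volume W = ENNReal.ofReal (Real.pi * ((rho y) ^ 2 - (rho y / 2) ^ 2)) := by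
        rw [hW, vol_oo (by positivity) (by linarith)]
      have hin : ENNReal.ofReal ((rho y / 2) ^ (2 * j)) * volume W
          ≤ ∫⁻ x in Metric.ball (0:ℂ) (rho y), ENNReal.ofReal (‖x‖ ^ (2 * j)) := by
        refine le_trans ?_ (lintegral_mono_set hWsub)
        rw [← setLIntegral_const W _]
        refine setLIntegral_mono' measW fun x hx => ?_
        exact ENNReal.ofReal_le_ofReal (pow_le_pow_left₀ (by positivity) hx.1.le _)
      calc ENNReal.ofReal Lo
          ≤ ENNReal.ofReal (s ^ (2 * k) * ((rho y / 2) ^ (2 * j) *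
              (Real.pi * ((rho y) ^ 2 - (rho y / 2) ^ 2)))) := by
            apply ENNReal.ofReal_le_ofReal
            rw [hLo, hρ]
            exact realY_low j k n hjk hsn hL1 hLn
        _ = ENNReal.ofReal (s ^ (2 * k)) *
              (ENNReal.ofReal ((rho y / 2) ^ (2 * j)) * volume W) := by
            rw [hvolW, ← ENNReal.ofReal_mul (by positivity), ← ENNReal.ofReal_mul (by positivity)]
        _ ≤ ENNReal.ofReal (s ^ (2 * k)) *
              ∫⁻ x in Metric.ball (0:ℂ) (rho y), ENNReal.ofReal (‖x‖ ^ (2 * j)) :=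
            mul_le_mul' le_rfl hin
    calc ENNReal.ofReal (u n) = ENNReal.ofReal Lo * volume (A n) := by
          rw [volA, hLo, hu, ← ENNReal.ofReal_mul (by positivity)]
      _ ≤ ∫⁻ _ in A n, ENNReal.ofReal Lo := by rw [setLIntegral_const]
      _ ≤ _ := setLIntegral_mono' (measA n) hpt
  -- divergence of the series
  have htop : (∑' n : ℕ, ENNReal.ofReal (u n)) = ⊤ := by
    have h0 : Filter.Tendsto (fun n : ℕ => ((n:ℝ)) ^ (2 * j + 2) / 4 ^ n) Filter.atTop (nhds 0) :=
      tendsto_pow_const_div_const_pow_of_one_lt (2 * j + 2) (by norm_num)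
    have h1 : Filter.Tendsto (fun n : ℕ => ((n:ℝ) + 3) ^ (2 * j + 2) / 4 ^ (n + 3))
        Filter.atTop (nhds 0) := by
      have h := h0.comp (Filter.tendsto_add_atTop_nat 3)
      refine h.congr fun n => ?_
      simp only [Function.comp_apply]
      push_cast
      ring
    have h2 : Filter.Tendsto (fun n : ℕ => ((n:ℝ) + 3) ^ (2 * j + 2) / 4 ^ n)
        Filter.atTop (nhds 0) := by
      have h2' := h1.const_mul (64:ℝ)
      rw [mul_zero] at h2'
      refine h2'.congr fun n => ?_
      have h43 : (4:ℝ) ^ (n + 3) = 4 ^ n * 64 := by rw [pow_add]; norm_num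
      rw [h43]
      have h4n : (0:ℝ) < 4 ^ n := by positivity
      field_simp
    have h3 : ∀ᶠ n : ℕ in Filter.atTop, ((n:ℝ) + 3) ^ (2 * j + 2) / 4 ^ n < 1 :=
      h2.eventually (gt_mem_nhds (by norm_num : (0:ℝ) < 1))
    obtain ⟨N, hN⟩ := Filter.eventually_atTop.mp h3
    set δ : ℝ≥0∞ := ENNReal.ofReal (c * (Real.pi * 48)) with hδ
    have hδ0 : δ ≠ 0 := by
      rw [hδ]
      exact (ENNReal.ofReal_pos.mpr (by positivity)).ne'
    have hshift : ∀ n : ℕ, δ ≤ ENNReal.ofReal (u (n + N)) := by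
      intro n
      apply ENNReal.ofReal_le_ofReal
      have hp : (0:ℝ) < ((n + N : ℕ):ℝ) + 3 := by positivity
      have hq : (0:ℝ) < (4:ℝ) ^ (n + N) := by positivity
      have hlt := hN (n + N) (by omega)
      have hle : (((n + N : ℕ):ℝ) + 3) ^ (2 * j + 2) ≤ 4 ^ (n + N) := by
        have := (div_lt_one hq).mp hlt
        exact this.le
      have hrat : (1:ℝ) ≤ 4 ^ (n + N) * (1 / (((n + N : ℕ):ℝ) + 3) ^ (2 * j + 2)) := by
        rw [mul_one_div, le_div_iff₀ (by positivity), one_mul]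
        exact hle
      calc c * (Real.pi * 48) = c * (Real.pi * 48) * 1 := by ring
        _ ≤ c * (Real.pi * 48) * (4 ^ (n + N) * (1 / (((n + N : ℕ):ℝ) + 3) ^ (2 * j + 2))) :=
            mul_le_mul_of_nonneg_left hrat (by positivity)
        _ = u (n + N) := by rw [hu]; push_cast; ring
    have hinj : Function.Injective (fun n : ℕ => n + N) := fun a b h => Nat.add_right_cancel h
    have hge : (∑' n : ℕ, ENNReal.ofReal (u (n + N))) ≤ ∑' n : ℕ, ENNReal.ofReal (u n) :=
      ENNReal.tsum_comp_le_tsum_of_injective hinj (fun n => ENNReal.ofReal (u n))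
    have hδtop : (∑' _ : ℕ, δ) = ⊤ := ENNReal.tsum_const_eq_top_of_ne_zero (α := ℕ) hδ0
    exact top_le_iff.mp (le_trans (le_of_eq hδtop.symm)
      (le_trans (ENNReal.tsum_le_tsum hshift) hge))
  exact top_le_iff.mp (le_trans (le_of_eq htop.symm) (ENNReal.tsum_le_tsum hterm))

end Stmt6

open Stmt6 in
/-- The monomial integral `∫_{Ω′} |z₁|^{2j} |z₂|^{2k} dV` is finite iff `j = k`. -/
theorem stmt_6 (X' Y' Z Ω' : Set (ℂ × ℂ))
    (hX' : X' = {z : ℂ × ℂ | 4 < ‖z.1‖ ∧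
      |‖z.2‖ - 1 / ‖z.1‖| < 1 / (‖z.1‖) ^ 3})
    (hY' : Y' = {z : ℂ × ℂ | 4 < ‖z.2‖ ∧
      ‖z.1‖ < 1 / (2 * ‖z.2‖ * (Real.log (‖z.2‖) / Real.log 4))})
    (hZ : Z = {z : ℂ × ℂ | ‖z.1‖ ≤ 4 ∧ ‖z.2‖ ≤ 4})
    (hΩ' : Ω' = X' ∪ Y' ∪ Z) (j k : ℕ) :
    (∫⁻ z in Ω', ENNReal.ofReal (‖z.1‖ ^ (2 * j) * ‖z.2‖ ^ (2 * k))) < ⊤ ↔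
      j = k := by
  subst hX' hY' hZ hΩ'
  show (∫⁻ z in XS ∪ YS ∪ ZS,
      ENNReal.ofReal (‖z.1‖ ^ (2 * j) * ‖z.2‖ ^ (2 * k))) < ⊤ ↔ j = k
  constructor
  · intro h
    by_contra hne
    rcases Nat.lt_or_ge j k with hlt | hge
    · have hY := Y_infinite j k hlt
      have hsub : YS ⊆ XS ∪ YS ∪ ZS :=
        Set.subset_union_left.trans' Set.subset_union_right
      have hge' : (⊤:ℝ≥0∞) ≤ ∫⁻ z in XS ∪ YS ∪ ZS,
          ENNReal.ofReal (‖z.1‖ ^ (2 * j) * ‖z.2‖ ^ (2 * k)) :=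
        le_trans (le_of_eq hY.symm) (lintegral_mono_set hsub)
      exact absurd (lt_of_le_of_lt hge' h) (lt_irrefl _)
    · have hlt' : k < j := lt_of_le_of_ne hge fun e => hne e.symm
      have hX := X_infinite j k hlt'
      have hsub : XS ⊆ XS ∪ YS ∪ ZS :=
        Set.subset_union_left.trans' Set.subset_union_left
      have hge' : (⊤:ℝ≥0∞) ≤ ∫⁻ z in XS ∪ YS ∪ ZS,
          ENNReal.ofReal (‖z.1‖ ^ (2 * j) * ‖z.2‖ ^ (2 * k)) :=
        le_trans (le_of_eq hX.symm) (lintegral_mono_set hsub)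
      exact absurd (lt_of_le_of_lt hge' h) (lt_irrefl _)
  · rintro rfl
    calc (∫⁻ z in XS ∪ YS ∪ ZS,
          ENNReal.ofReal (‖z.1‖ ^ (2 * j) * ‖z.2‖ ^ (2 * j)))
        ≤ (∫⁻ z in XS ∪ YS,
            ENNReal.ofReal (‖z.1‖ ^ (2 * j) * ‖z.2‖ ^ (2 * j)))
          + ∫⁻ z in ZS,
            ENNReal.ofReal (‖z.1‖ ^ (2 * j) * ‖z.2‖ ^ (2 * j)) :=
          lintegral_union_le _ _ _
      _ ≤ ((∫⁻ z in XS,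
            ENNReal.ofReal (‖z.1‖ ^ (2 * j) * ‖z.2‖ ^ (2 * j)))
          + ∫⁻ z in YS,
            ENNReal.ofReal (‖z.1‖ ^ (2 * j) * ‖z.2‖ ^ (2 * j)))
          + ∫⁻ z in ZS,
            ENNReal.ofReal (‖z.1‖ ^ (2 * j) * ‖z.2‖ ^ (2 * j)) :=
          add_le_add_left (lintegral_union_le _ _ _) _
      _ < ⊤ := by
          have h1 := X_finite j
          have h2 := Y_finite j
          have h3 := Z_finite j j
          exact ENNReal.add_lt_top.mpr ⟨ENNReal.add_lt_top.mpr ⟨h1, h2⟩, h3⟩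
end

section
/- For every natural number k, 0 < c_k² < ∞, where c_k² = ∫_Ω |z₁ z₂|^{2k} dV(z₁,z₂); i.e., each monomial (z₁z₂)^k is square-integrable on Ω with strictly positive L²-norm. -/
open Complex MeasureTheory

section AuxStmt10

open Metric
open scoped ENNReal NNReal

private lemma aux_shell10 {t : ℝ} (ht : 4 < t) : ∃ n : ℕ, (4:ℝ)^(n+1) ≤ t ∧ t < 4^(n+2) := by
  obtain ⟨n, h1, h2⟩ := exists_nat_pow_near (x := t) (y := (4:ℝ)) (by linarith) (by norm_num)
  match n, h1, h2 with
  | 0, h1, h2 => norm_num at h2; linarith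
  | (m+1), h1, h2 => exact ⟨m, h1, h2⟩

private lemma aux_tsum_lt_top10 {a : ℕ → ℝ} (h : Summable a) (h0 : ∀ n, 0 ≤ a n) :
    ∑' n, ENNReal.ofReal (a n) < ⊤ := by
  rw [← ENNReal.ofReal_tsum_of_nonneg h0 h]; exact ENNReal.ofReal_lt_top

private lemma aux_pi_coe10 : ((NNReal.pi : ℝ≥0) : ℝ≥0∞) = ENNReal.ofReal Real.pi := by
  rw [← NNReal.coe_real_pi, ENNReal.ofReal_coe_nnreal]

private lemma aux_summable10 : Summable (fun n : ℕ => 4*Real.pi^2 / ((n:ℝ)+1)^2) := by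
  apply Summable.mul_left
  have := (summable_nat_add_iff (f := fun n : ℕ => ((n:ℝ)^2)⁻¹) 1).2
    (Real.summable_one_div_nat_pow.2 one_lt_two |>.congr (by intro n; simp [one_div]))
  exact this.congr (by intro n; push_cast; norm_num [one_div])

private lemma aux_summable10' : Summable (fun n : ℕ => 4*Real.pi^2 * ((16:ℝ)⁻¹)^n) :=
  (summable_geometric_of_lt_one (by norm_num) (by norm_num)).mul_left _

private lemma aux_Y_meas10 (Y : Set (ℂ × ℂ))
    (hY : Y = {z : ℂ × ℂ | 4 < ‖z.2‖ ∧
      |‖z.1‖ - 1 / ‖z.2‖| < 1 / (‖z.2‖) ^ 3}) :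
    MeasurableSet Y := by
  rw [hY]
  have m2 : Measurable fun z : ℂ × ℂ => ‖z.2‖ :=
    continuous_norm.measurable.comp measurable_snd
  have m1 : Measurable fun z : ℂ × ℂ => ‖z.1‖ :=
    continuous_norm.measurable.comp measurable_fst
  exact (measurableSet_lt measurable_const m2).inter
    (measurableSet_lt ((m1.sub ((measurable_const.div m2))).abs)
      (measurable_const.div (m2.pow_const 3)))

private lemma aux_pos10 (k : ℕ) (Ω Z : Set (ℂ × ℂ))
    (hZ : Z = {z : ℂ × ℂ | ‖z.1‖ ≤ 4 ∧ ‖z.2‖ ≤ 4})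
    (hZΩ : Z ⊆ Ω) :
    0 < (∫⁻ z in Ω, ENNReal.ofReal (‖z.1 * z.2‖ ^ (2 * k))) := by
  set S : Set (ℂ × ℂ) := ball (1:ℂ) 2⁻¹ ×ˢ ball (1:ℂ) 2⁻¹ with hS
  have hSopen : IsOpen S := isOpen_ball.prod isOpen_ball
  have hSne : S.Nonempty := ⟨(1,1), by simp [hS, Set.mem_prod, mem_ball]⟩
  have habs : ∀ z ∈ S, 2⁻¹ ≤ ‖z.1‖ ∧ 2⁻¹ ≤ ‖z.2‖ ∧
      ‖z.1‖ ≤ 4 ∧ ‖z.2‖ ≤ 4 := by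
    rintro z ⟨h1, h2⟩
    simp only [mem_ball, Complex.dist_eq] at h1 h2
    have e1 := norm_sub_norm_le z.1 (1:ℂ)
    have e1' := norm_sub_norm_le (1:ℂ) z.1
    have e2 := norm_sub_norm_le z.2 (1:ℂ)
    have e2' := norm_sub_norm_le (1:ℂ) z.2
    rw [norm_sub_rev (1:ℂ) z.1] at e1'
    rw [norm_sub_rev (1:ℂ) z.2] at e2'
    simp only [norm_one] at e1 e1' e2 e2'
    refine ⟨by linarith, by linarith, by linarith, by linarith⟩
  have hSZ : S ⊆ Z := fun z hz => hZ ▸ ⟨(habs z hz).2.2.1, (habs z hz).2.2.2⟩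
  calc (0:ℝ≥0∞) < ENNReal.ofReal ((4:ℝ)⁻¹ ^ (2*k)) * volume S := by
        apply ENNReal.mul_pos
        · simp only [ne_eq, ENNReal.ofReal_eq_zero, not_le]; positivity
        · exact (hSopen.measure_pos volume hSne).ne'
    _ = ∫⁻ _ in S, ENNReal.ofReal ((4:ℝ)⁻¹ ^ (2*k)) := by
        rw [setLIntegral_const]
    _ ≤ ∫⁻ z in S, ENNReal.ofReal (‖z.1 * z.2‖ ^ (2 * k)) := by
        apply setLIntegral_mono
          (((continuous_norm.comp (continuous_fst.mul continuous_snd)).pow _).measurable.ennreal_ofReal)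
        intro z hz
        apply ENNReal.ofReal_le_ofReal
        apply pow_le_pow_left₀ (by positivity)
        simp only [Function.comp_apply]
        rw [Pi.mul_apply, norm_mul]
        calc (4:ℝ)⁻¹ = 2⁻¹ * 2⁻¹ := by norm_num
          _ ≤ ‖z.1‖ * ‖z.2‖ :=
            mul_le_mul (habs z hz).1 (habs z hz).2.1 (by norm_num) (by linarith [(habs z hz).1])
    _ ≤ ∫⁻ z in Ω, ENNReal.ofReal (‖z.1 * z.2‖ ^ (2 * k)) :=
        lintegral_mono_set (hSZ.trans hZΩ)

private lemma aux_Z10 (k : ℕ) (Z : Set (ℂ × ℂ))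
    (hZ : Z = {z : ℂ × ℂ | ‖z.1‖ ≤ 4 ∧ ‖z.2‖ ≤ 4}) :
    (∫⁻ z in Z, ENNReal.ofReal (‖z.1 * z.2‖ ^ (2 * k))) < ⊤ := by
  have hvol : volume Z < ⊤ := by
    refine lt_of_le_of_lt (measure_mono (show Z ⊆ closedBall (0 : ℂ × ℂ) 4 from ?_))
      measure_closedBall_lt_top
    intro z hz
    rw [hZ] at hz
    rw [mem_closedBall, dist_zero_right, Prod.norm_def]
    exact max_le (by simpa using hz.1) (by simpa using hz.2)
  calc (∫⁻ z in Z, ENNReal.ofReal (‖z.1 * z.2‖ ^ (2 * k)))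
      ≤ ∫⁻ _ in Z, ENNReal.ofReal ((16:ℝ) ^ (2*k)) := by
        apply setLIntegral_mono measurable_const
        intro z hz
        rw [hZ] at hz
        apply ENNReal.ofReal_le_ofReal
        apply pow_le_pow_left₀ (by positivity)
        rw [norm_mul]
        calc ‖z.1‖ * ‖z.2‖ ≤ 4 * 4 :=
              mul_le_mul hz.1 hz.2 (norm_nonneg _) (by norm_num)
          _ = 16 := by norm_num
    _ = ENNReal.ofReal ((16:ℝ) ^ (2*k)) * volume Z := setLIntegral_const _ _
    _ < ⊤ := ENNReal.mul_lt_top ENNReal.ofReal_lt_top hvol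

private lemma aux_X10 (k : ℕ) (X : Set (ℂ × ℂ))
    (hX : X = {z : ℂ × ℂ | 4 < ‖z.1‖ ∧
      ‖z.2‖ < 1 / (2 * ‖z.1‖ * (Real.log (‖z.1‖) / Real.log 4))}) :
    (∫⁻ z in X, ENNReal.ofReal (‖z.1 * z.2‖ ^ (2 * k))) < ⊤ := by
  have hlog4 : (0:ℝ) < Real.log 4 := Real.log_pos (by norm_num)
  have hbound : ∀ z ∈ X, ENNReal.ofReal (‖z.1 * z.2‖ ^ (2 * k)) ≤ 1 := by
    intro z hz
    rw [hX] at hz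
    obtain ⟨h1, h2⟩ := hz
    have hL : 1 ≤ Real.log (‖z.1‖) / Real.log 4 := by
      rw [le_div_iff₀ hlog4]
      simpa using Real.log_le_log (by norm_num) h1.le
    have hd : 0 < 2 * ‖z.1‖ * (Real.log (‖z.1‖) / Real.log 4) := by
      have : (0:ℝ) < ‖z.1‖ := by linarith
      nlinarith
    have h12 : ‖z.1‖ * ‖z.2‖ ≤ 1 := by
      have h2' := (lt_div_iff₀ hd).1 h2
      nlinarith [norm_nonneg z.2, norm_nonneg z.1,
        mul_nonneg (norm_nonneg z.1) (norm_nonneg z.2)]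
    calc ENNReal.ofReal (‖z.1 * z.2‖ ^ (2 * k))
        ≤ ENNReal.ofReal (1 ^ (2*k)) := by
          apply ENNReal.ofReal_le_ofReal
          apply pow_le_pow_left₀ (by positivity)
          rw [norm_mul]; exact h12
      _ = 1 := by norm_num
  have hXsub : X ⊆ ⋃ n : ℕ, (ball (0:ℂ) (4^(n+2)) ×ˢ ball (0:ℂ) ((2*4^(n+1)*((n:ℝ)+1))⁻¹)) := by
    intro z hz
    rw [hX] at hz
    obtain ⟨h1, h2⟩ := hz
    obtain ⟨n, hn1, hn2⟩ := aux_shell10 h1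
    refine Set.mem_iUnion.2 ⟨n, ?_, ?_⟩
    · rw [mem_ball_zero_iff]; exact hn2
    · rw [mem_ball_zero_iff]
      have hL : (n:ℝ)+1 ≤ Real.log (‖z.1‖) / Real.log 4 := by
        rw [le_div_iff₀ hlog4]
        have : ((n:ℝ)+1) * Real.log 4 = Real.log ((4:ℝ)^(n+1)) := by
          rw [Real.log_pow]; push_cast; ring
        rw [this]
        exact Real.log_le_log (by positivity) hn1
      have hb : (0:ℝ) < 4^(n+1) := by positivity
      have key : 2*4^(n+1)*((n:ℝ)+1) ≤ 2 * ‖z.1‖ * (Real.log (‖z.1‖) / Real.log 4) := by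
        have h1' : (0:ℝ) < ‖z.1‖ := by linarith
        have : (0:ℝ) < (n:ℝ)+1 := by positivity
        nlinarith
      calc ‖z.2‖ < 1 / (2 * ‖z.1‖ * (Real.log (‖z.1‖) / Real.log 4)) := h2
        _ ≤ 1 / (2*4^(n+1)*((n:ℝ)+1)) := by
            apply one_div_le_one_div_of_le (by positivity) key
        _ = (2*4^(n+1)*((n:ℝ)+1))⁻¹ := one_div _
  have hvol : volume X < ⊤ := by
    calc volume X ≤ ∑' n : ℕ, volume ((ball (0:ℂ) (4^(n+2)) ×ˢ ball (0:ℂ) ((2*4^(n+1)*((n:ℝ)+1))⁻¹)) : Set (ℂ × ℂ)) :=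
          (measure_mono hXsub).trans (measure_iUnion_le _)
      _ = ∑' n : ℕ, ENNReal.ofReal (4*Real.pi^2 / ((n:ℝ)+1)^2) := by
          congr 1; funext n
          rw [Measure.volume_eq_prod, Measure.prod_prod, Complex.volume_ball, Complex.volume_ball, aux_pi_coe10]
          have hb : (0:ℝ) < 4^(n+1) := by positivity
          have hr : (0:ℝ) ≤ (2*4^(n+1)*((n:ℝ)+1))⁻¹ := by positivity
          rw [← ENNReal.ofReal_pow (by positivity), ← ENNReal.ofReal_pow hr,
            ← ENNReal.ofReal_mul (by positivity), ← ENNReal.ofReal_mul (by positivity),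
            ← ENNReal.ofReal_mul (by positivity)]
          congr 1
          have h4 : (4:ℝ)^(n+2) = 4 * 4^(n+1) := by ring
          rw [h4]
          have hn1 : (0:ℝ) < (n:ℝ)+1 := by positivity
          field_simp
          ring
      _ < ⊤ := aux_tsum_lt_top10 aux_summable10 (fun n => by positivity)
  calc (∫⁻ z in X, ENNReal.ofReal (‖z.1 * z.2‖ ^ (2 * k)))
      ≤ ∫⁻ _ in X, 1 := setLIntegral_mono measurable_const hbound
    _ = 1 * volume X := setLIntegral_const _ _
    _ < ⊤ := by rwa [one_mul]

private lemma aux_Y10 (k : ℕ) (Y : Set (ℂ × ℂ))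
    (hY : Y = {z : ℂ × ℂ | 4 < ‖z.2‖ ∧
      |‖z.1‖ - 1 / ‖z.2‖| < 1 / (‖z.2‖) ^ 3}) :
    (∫⁻ z in Y, ENNReal.ofReal (‖z.1 * z.2‖ ^ (2 * k))) < ⊤ := by
  have hYm := aux_Y_meas10 Y hY
  have hbound : ∀ z ∈ Y, ENNReal.ofReal (‖z.1 * z.2‖ ^ (2 * k))
      ≤ ENNReal.ofReal ((2:ℝ) ^ (2*k)) := by
    intro z hz
    rw [hY] at hz
    obtain ⟨h1, h2⟩ := hz
    obtain ⟨h2a, h2b⟩ := abs_lt.1 h2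
    set s := ‖z.2‖ with hs
    have hs0 : (0:ℝ) < s := by linarith
    apply ENNReal.ofReal_le_ofReal
    apply pow_le_pow_left₀ (by positivity)
    rw [norm_mul, ← hs]
    have ht : ‖z.1‖ < 1/s + 1/s^3 := by linarith
    have e : (1/s + 1/s^3)*s = 1 + 1/s^2 := by field_simp
    have e2 : 1/s^2 ≤ 1 := by rw [div_le_one (by positivity)]; nlinarith
    nlinarith [norm_nonneg z.1]
  set G : ℕ → ℂ → ℝ≥0∞ := fun n y => (ball (0:ℂ) (4^(n+2))).indicator
    (fun _ => ENNReal.ofReal (4*Real.pi * (((4:ℝ)^(n+1))⁻¹)^4)) y with hG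
  have hslice : ∀ y : ℂ, volume ((fun x => (x,y)) ⁻¹' Y) ≤ ∑' n, G n y := by
    intro y
    by_cases hy : 4 < ‖y‖
    · obtain ⟨n, hn1, hn2⟩ := aux_shell10 hy
      set s := ‖y‖ with hs
      have hs0 : (0:ℝ) < s := by linarith
      set a := 1/s - 1/s^3 with ha
      set b := 1/s + 1/s^3 with hb
      have hab : 0 < a := by
        rw [ha, sub_pos, div_lt_div_iff₀ (by positivity) (by positivity)]
        nlinarith [mul_pos hs0 hs0]
      have hsub : ((fun x => (x,y)) ⁻¹' Y) ⊆ ball (0:ℂ) b \ closedBall (0:ℂ) a := by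
        intro x hx
        rw [Set.mem_preimage, hY] at hx
        obtain ⟨hx2a, hx2b⟩ := abs_lt.1 hx.2
        constructor
        · rw [mem_ball_zero_iff]; simp only at hx2b ⊢; rw [hb]; linarith
        · intro hc
          rw [mem_closedBall, dist_zero_right] at hc
          rw [ha] at hc
          simp only at hx2a
          linarith
      have hdiff : volume (ball (0:ℂ) b \ closedBall (0:ℂ) a) =
          ENNReal.ofReal (b^2*Real.pi) - ENNReal.ofReal (a^2*Real.pi) := by
        rw [measure_diff (closedBall_subset_ball (by rw [ha, hb]; linarith [div_pos one_pos (pow_pos hs0 3)]))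
          measurableSet_closedBall.nullMeasurableSet
          (by rw [Complex.volume_closedBall]; exact (ENNReal.mul_lt_top (ENNReal.pow_lt_top ENNReal.ofReal_lt_top) ENNReal.coe_lt_top).ne),
          Complex.volume_ball, Complex.volume_closedBall, aux_pi_coe10,
          ← ENNReal.ofReal_pow hab.le, ← ENNReal.ofReal_pow (by rw [hb]; positivity),
          ← ENNReal.ofReal_mul (by positivity), ← ENNReal.ofReal_mul (by positivity)]
      have hval : volume ((fun x => (x,y)) ⁻¹' Y) ≤
          ENNReal.ofReal (4*Real.pi * (((4:ℝ)^(n+1))⁻¹)^4) := by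
        refine le_trans (measure_mono hsub) ?_
        rw [hdiff, ← ENNReal.ofReal_sub _ (by positivity)]
        apply ENNReal.ofReal_le_ofReal
        have hq : b^2*Real.pi - a^2*Real.pi = 4*Real.pi * (s⁻¹)^4 := by
          rw [ha, hb]; field_simp; ring
        rw [hq]
        have : (((4:ℝ)^(n+1))⁻¹)^4 ≥ (s⁻¹)^4 := by
          apply pow_le_pow_left₀ (by positivity)
          exact inv_anti₀ (by positivity) hn1
        nlinarith [Real.pi_pos]
      refine hval.trans ?_
      refine le_trans ?_ (ENNReal.le_tsum n)
      rw [hG]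
      simp only
      rw [Set.indicator_of_mem (by rw [mem_ball_zero_iff]; exact hn2)]
    · have : ((fun x => (x,y)) ⁻¹' Y) = ∅ := by
        ext x
        simp only [Set.mem_preimage, Set.mem_empty_iff_false, iff_false]
        intro hx
        rw [hY] at hx
        exact hy hx.1
      rw [this]
      simp
  have hvol : volume Y < ⊤ := by
    rw [Measure.volume_eq_prod, Measure.prod_apply_symm hYm]
    calc (∫⁻ y, volume ((fun x => (x,y)) ⁻¹' Y)) ≤ ∫⁻ y, ∑' n, G n y := lintegral_mono hslice
      _ = ∑' n, ∫⁻ y, G n y :=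
          lintegral_tsum (fun n => (measurable_const.indicator measurableSet_ball).aemeasurable)
      _ = ∑' n, ENNReal.ofReal (4*Real.pi^2 * ((16:ℝ)⁻¹)^n) := by
          congr 1; funext n
          rw [hG]
          simp only
          rw [lintegral_indicator measurableSet_ball, setLIntegral_const,
            Complex.volume_ball, aux_pi_coe10,
            ← ENNReal.ofReal_pow (by positivity),
            ← ENNReal.ofReal_mul (by positivity), ← ENNReal.ofReal_mul (by positivity)]
          congr 1
          have h16 : (16:ℝ)^n = 4^n*4^n := by rw [show (16:ℝ) = 4*4 by norm_num, mul_pow]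
          have h1 : ((4:ℝ)^(n+1)) = 4*4^n := by ring
          have h2 : ((4:ℝ)^(n+2)) = 16*4^n := by ring
          rw [h1, h2, inv_pow]
          have h3 : (0:ℝ) < 4^n := by positivity
          field_simp
          rw [one_div, inv_pow, h16, sq ((4:ℝ)^n), mul_assoc, mul_inv_cancel₀ (by positivity), mul_one]
          norm_num
      _ < ⊤ := aux_tsum_lt_top10 aux_summable10' (fun n => by positivity)
  calc (∫⁻ z in Y, ENNReal.ofReal (‖z.1 * z.2‖ ^ (2 * k)))
      ≤ ∫⁻ _ in Y, ENNReal.ofReal ((2:ℝ) ^ (2*k)) := setLIntegral_mono measurable_const hbound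
    _ = ENNReal.ofReal ((2:ℝ) ^ (2*k)) * volume Y := setLIntegral_const _ _
    _ < ⊤ := ENNReal.mul_lt_top ENNReal.ofReal_lt_top hvol

end AuxStmt10

/-- Each monomial `(z₁z₂)^k` is square-integrable on `Ω` with strictly positive norm:
`0 < c_k² < ∞` where `c_k² = ∫_Ω |z₁z₂|^{2k} dV`. -/
theorem stmt_10 (X Y Z Ω : Set (ℂ × ℂ))
    (hX : X = {z : ℂ × ℂ | 4 < ‖z.1‖ ∧
      ‖z.2‖ < 1 / (2 * ‖z.1‖ * (Real.log (‖z.1‖) / Real.log 4))})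
    (hY : Y = {z : ℂ × ℂ | 4 < ‖z.2‖ ∧
      |‖z.1‖ - 1 / ‖z.2‖| < 1 / (‖z.2‖) ^ 3})
    (hZ : Z = {z : ℂ × ℂ | ‖z.1‖ ≤ 4 ∧ ‖z.2‖ ≤ 4})
    (hΩ : Ω = X ∪ Y ∪ Z) (k : ℕ) :
    0 < (∫⁻ z in Ω, ENNReal.ofReal (‖z.1 * z.2‖ ^ (2 * k))) ∧
      (∫⁻ z in Ω, ENNReal.ofReal (‖z.1 * z.2‖ ^ (2 * k))) < ⊤ := by
  constructor
  · exact aux_pos10 k Ω Z hZ (by rw [hΩ]; exact Set.subset_union_right)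
  · rw [hΩ]
    calc (∫⁻ z in X ∪ Y ∪ Z, ENNReal.ofReal (‖z.1 * z.2‖ ^ (2 * k)))
        ≤ (∫⁻ z in X ∪ Y, ENNReal.ofReal (‖z.1 * z.2‖ ^ (2 * k)))
          + (∫⁻ z in Z, ENNReal.ofReal (‖z.1 * z.2‖ ^ (2 * k))) :=
          lintegral_union_le _ _ _
      _ ≤ ((∫⁻ z in X, ENNReal.ofReal (‖z.1 * z.2‖ ^ (2 * k)))
          + (∫⁻ z in Y, ENNReal.ofReal (‖z.1 * z.2‖ ^ (2 * k))))
          + (∫⁻ z in Z, ENNReal.ofReal (‖z.1 * z.2‖ ^ (2 * k))) :=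
          add_le_add_left (lintegral_union_le _ _ _) _
      _ < ⊤ := ENNReal.add_lt_top.2 ⟨ENNReal.add_lt_top.2 ⟨aux_X10 k X hX, aux_Y10 k Y hY⟩,
          aux_Z10 k Z hZ⟩
end

section
/- Let f : ℂ → ℂ be measurable, radial (f(w) depends only on |w|, i.e., |w| = |w′| implies f(w) = f(w′)), and integrable on the open unit disc 𝔻 = {w ∈ ℂ : |w| < 1}. Then for every z ∈ 𝔻, ∫_{w ∈ 𝔻} f(w) · (1 − z·conj(w))^{−2} dA(w) = ∫_{w ∈ 𝔻} f(w) dA(w); in particular, the Bergman projection (with kernel K_𝔻(z,w) = π^{−1}(1 − z·conj(w))^{−2}) of a radial integrable function on the disc is the constant π^{−1}∫_𝔻 f dA. -/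
open Complex MeasureTheory
open scoped Real

private lemma circle_avg_pos (c : ℂ) (hc : ‖c‖ < 1) :
    ∫ θ in (0:ℝ)..(2*π), ((1 - c * Complex.exp (θ * Complex.I)) ^ 2)⁻¹
      = ((2*π : ℝ) : ℂ) := by
  set g : ℂ → ℂ := fun ζ => ((1 - c * ζ) ^ 2)⁻¹ with hg
  have hne : ∀ ζ : ℂ, ‖ζ‖ ≤ 1 → 1 - c * ζ ≠ 0 := by
    intro ζ hζ h
    rw [sub_eq_zero] at h
    have h2 := congrArg (‖·‖) h
    simp only [norm_mul, norm_one] at h2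
    nlinarith [norm_nonneg c, norm_nonneg ζ]
  have hdiff : DiffContOnCl ℂ g (Metric.ball 0 1) := by
    apply DifferentiableOn.diffContOnCl
    rw [closure_ball (0:ℂ) one_ne_zero]
    intro ζ hζ
    refine DifferentiableAt.differentiableWithinAt ?_
    refine DifferentiableAt.inv ?_ ?_
    · exact ((differentiableAt_const _).sub
        ((differentiableAt_const _).mul differentiableAt_id)).pow 2
    · refine pow_ne_zero _ (hne ζ ?_)
      simpa [Complex.dist_eq] using hζ
  have hcauchy := hdiff.circleIntegral_sub_inv_smul (w := 0) (Metric.mem_ball_self one_pos)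
  rw [circleIntegral] at hcauchy
  simp only [deriv_circleMap, circleMap, zero_add, ofReal_one, one_mul, sub_zero,
    smul_eq_mul] at hcauchy
  have h0 : g 0 = 1 := by simp [hg]
  have heq : ∀ θ : ℝ, Complex.exp (θ * Complex.I) * Complex.I *
      ((Complex.exp (θ * Complex.I))⁻¹ * g (Complex.exp (θ * Complex.I)))
      = Complex.I * g (Complex.exp (θ * Complex.I)) := by
    intro θ
    field_simp [Complex.exp_ne_zero]
  rw [intervalIntegral.integral_congr (fun θ _ => heq θ)] at hcauchy
  rw [intervalIntegral.integral_const_mul] at hcauchy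
  rw [h0, mul_one] at hcauchy
  exact mul_left_cancel₀ Complex.I_ne_zero (by rw [hcauchy]; push_cast; ring)

private lemma circle_avg (c : ℂ) (hc : ‖c‖ < 1) :
    ∫ α in Set.Ioc (0:ℝ) (2*π), ((1 - c * Complex.exp (-(α * Complex.I))) ^ 2)⁻¹
      = ((2*π : ℝ) : ℂ) := by
  set h : ℝ → ℂ := fun θ => ((1 - c * Complex.exp (θ * Complex.I)) ^ 2)⁻¹ with hh
  have hper : Function.Periodic h (2*π) := by
    intro θ
    simp only [hh]
    congr 2
    push_cast
    rw [add_mul, Complex.exp_add, Complex.exp_two_pi_mul_I, mul_one]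
  have key : ∀ α : ℝ, ((1 - c * Complex.exp (-(α * Complex.I))) ^ 2)⁻¹ = h (-α) := by
    intro α
    simp only [hh]
    push_cast
    ring_nf
  rw [← intervalIntegral.integral_of_le (by positivity : (0:ℝ) ≤ 2*π)]
  rw [intervalIntegral.integral_congr (fun α _ => key α)]
  rw [intervalIntegral.integral_comp_neg h]
  have h1 : ∫ x in (-(2*π))..(-0:ℝ), h x = ∫ x in (0:ℝ)..(0+2*π), h x := by
    rw [neg_zero]
    have := hper.intervalIntegral_add_eq (-(2*π)) 0
    rw [show -(2*π)+2*π = (0:ℝ) by ring] at this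
    exact this
  rw [h1, zero_add]
  exact circle_avg_pos c hc

private lemma rot_inv (f : ℂ → ℂ)
    (hf_rad : ∀ w w' : ℂ, ‖w‖ = ‖w'‖ → f w = f w')
    (z : ℂ) (α : ℝ) :
    ∫ w in Metric.ball (0:ℂ) 1,
        f w * ((1 - z * (starRingEnd ℂ) w * Complex.exp (-(α * Complex.I))) ^ 2)⁻¹
      = ∫ w in Metric.ball (0:ℂ) 1, f w * ((1 - z * (starRingEnd ℂ) w) ^ 2)⁻¹ := by
  set e : ℂ ≃ₗᵢ[ℝ] ℂ := rotation (Circle.exp α) with he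
  have hmp : MeasurePreserving e := e.measurePreserving
  have hemb : MeasurableEmbedding e := e.toHomeomorph.measurableEmbedding
  have hball : e ⁻¹' (Metric.ball 0 1) = Metric.ball 0 1 := by
    ext x
    simp only [Set.mem_preimage, Metric.mem_ball, Complex.dist_eq, sub_zero]
    rw [he, rotation_apply, norm_mul, Circle.norm_coe, one_mul]
  have h := hmp.setIntegral_preimage_emb hemb
    (fun w => f w * ((1 - z * (starRingEnd ℂ) w) ^ 2)⁻¹) (Metric.ball 0 1)
  rw [hball] at h
  rw [← h]
  apply setIntegral_congr_fun measurableSet_ball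
  intro x _
  have h1 : f (e x) = f x := by
    apply hf_rad
    rw [he, rotation_apply, norm_mul, Circle.norm_coe, one_mul]
  have h2 : (starRingEnd ℂ) (e x) = Complex.exp (-(α * Complex.I)) * (starRingEnd ℂ) x := by
    rw [he, rotation_apply, map_mul, Circle.coe_exp, ← Complex.exp_conj]
    congr 2
    simp [Complex.conj_I]
  simp only [h1, h2]
  ring_nf

/-- The Bergman projection of a radial integrable function on the unit disc is constant:
for radial integrable `f` and any `z` in the disc,
`∫_𝔻 f(w) (1 − z·conj w)^{−2} dA(w) = ∫_𝔻 f(w) dA(w)`. -/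
theorem stmt_14 (f : ℂ → ℂ) (hf_meas : Measurable f)
    (hf_rad : ∀ w w' : ℂ, ‖w‖ = ‖w'‖ → f w = f w')
    (hf_int : IntegrableOn f (Metric.ball (0 : ℂ) 1)) :
    ∀ z ∈ Metric.ball (0 : ℂ) 1,
      ∫ w in Metric.ball (0 : ℂ) 1, f w * ((1 - z * (starRingEnd ℂ) w) ^ 2)⁻¹ =
        ∫ w in Metric.ball (0 : ℂ) 1, f w := by
  intro z hz
  have hz1 : ‖z‖ < 1 := by simpa [Complex.dist_eq] using hz
  set B := Metric.ball (0:ℂ) 1 with hB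
  set μ := volume.restrict (Set.Ioc (0:ℝ) (2*π)) with hμ
  set ν := volume.restrict B with hν
  set F : ℝ → ℂ → ℂ := fun α w =>
    f w * ((1 - z * (starRingEnd ℂ) w * Complex.exp (-(α * Complex.I))) ^ 2)⁻¹ with hF
  set C : ℝ := ((1 - ‖z‖) ^ 2)⁻¹ with hC
  -- integrability on the product
  have hmeasF : Measurable (fun p : ℝ × ℂ => F p.1 p.2) := by
    apply (hf_meas.comp measurable_snd).mul
    apply Measurable.inv
    apply Measurable.pow _ measurable_const
    have hconj : Continuous fun p : ℝ × ℂ => (starRingEnd ℂ) p.2 :=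
      Complex.continuous_conj.comp continuous_snd
    have hexp : Continuous fun p : ℝ × ℂ => Complex.exp (-(p.1 * Complex.I)) :=
      Complex.continuous_exp.comp
        (((Complex.continuous_ofReal.comp continuous_fst).mul continuous_const).neg)
    exact (continuous_const.sub ((continuous_const.mul hconj).mul hexp)).measurable
  have hbound_int : Integrable (fun p : ℝ × ℂ => C * ‖f p.2‖) (μ.prod ν) := by
    apply Integrable.mul_prod (f := fun _ : ℝ => C) (g := fun w : ℂ => ‖f w‖)
    · exact integrableOn_const measure_Ioc_lt_top.ne
    · simpa using hf_int.norm
  have haeB : ∀ᵐ p : ℝ × ℂ ∂(μ.prod ν), p.2 ∈ B := by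
    rw [ae_iff]
    have hset : {p : ℝ × ℂ | ¬ p.2 ∈ B} = Set.univ ×ˢ Bᶜ := by
      ext p; simp
    rw [hset, Measure.prod_prod]
    have : ν Bᶜ = 0 := by
      rw [hν, Measure.restrict_apply (measurableSet_ball.compl)]
      simp [hB]
    rw [this, mul_zero]
  have hInt : Integrable (Function.uncurry F) (μ.prod ν) := by
    rw [Function.uncurry_def]
    apply Integrable.mono' hbound_int hmeasF.aestronglyMeasurable
    filter_upwards [haeB] with p hp
    have hw1 : ‖p.2‖ < 1 := by simpa [hB, Complex.dist_eq] using hp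
    have hden : (1:ℝ) - ‖z‖ ≤
        ‖1 - z * (starRingEnd ℂ) p.2 * Complex.exp (-(p.1 * Complex.I))‖ := by
      have h1 : ‖z * (starRingEnd ℂ) p.2 * Complex.exp (-(p.1 * Complex.I))‖
          ≤ ‖z‖ := by
        rw [norm_mul, norm_mul]
        rw [Complex.norm_conj]
        rw [show (-((p.1:ℂ) * Complex.I)) = ((-p.1 : ℝ) : ℂ) * Complex.I by push_cast; ring]
        rw [Complex.norm_exp_ofReal_mul_I]
        nlinarith [norm_nonneg z, norm_nonneg p.2]
      calc (1:ℝ) - ‖z‖ ≤ 1 - ‖z * (starRingEnd ℂ) p.2 *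
            Complex.exp (-(p.1 * Complex.I))‖ := by linarith
        _ ≤ _ := by
            have := norm_sub_norm_le (1:ℂ) (z * (starRingEnd ℂ) p.2 *
              Complex.exp (-(p.1 * Complex.I)))
            simpa using this
    have hpos : (0:ℝ) < 1 - ‖z‖ := by linarith
    rw [hF]
    simp only [norm_mul, norm_inv, norm_pow]
    rw [mul_comm C _]
    apply mul_le_mul_of_nonneg_left _ (norm_nonneg _)
    rw [hC]
    apply inv_anti₀ (by positivity)
    apply pow_le_pow_left₀ (by linarith) hden
  -- Fubini
  have hswap := integral_integral_swap hInt
  -- LHS of hswap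
  have hLHS : ∫ α, (∫ w, F α w ∂ν) ∂μ
      = ((2*π : ℝ) : ℂ) * ∫ w in B, f w * ((1 - z * (starRingEnd ℂ) w) ^ 2)⁻¹ := by
    have : ∀ α : ℝ, (∫ w, F α w ∂ν)
        = ∫ w in B, f w * ((1 - z * (starRingEnd ℂ) w) ^ 2)⁻¹ := fun α =>
      rot_inv f hf_rad z α
    rw [integral_congr_ae (Filter.Eventually.of_forall this), integral_const]
    rw [hμ]
    simp [Real.volume_Ioc, Measure.restrict_apply, ENNReal.toReal_ofReal Real.two_pi_pos.le,
      smul_eq_mul]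
    left; rw [max_eq_left Real.two_pi_pos.le]; push_cast; ring
  -- RHS of hswap
  have hRHS : ∫ w, (∫ α, F α w ∂μ) ∂ν = ((2*π : ℝ) : ℂ) * ∫ w in B, f w := by
    have hinner : ∀ w ∈ B, (∫ α, F α w ∂μ) = f w * ((2*π : ℝ) : ℂ) := by
      intro w hw
      have hw1 : ‖w‖ < 1 := by simpa [hB, Complex.dist_eq] using hw
      have hc : ‖z * (starRingEnd ℂ) w‖ < 1 := by
        rw [norm_mul, Complex.norm_conj]
        nlinarith [norm_nonneg z, norm_nonneg w]
      rw [hF]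
      simp only
      rw [integral_const_mul]
      congr 1
      rw [hμ]
      exact circle_avg (z * (starRingEnd ℂ) w) hc
    rw [hν, setIntegral_congr_fun measurableSet_ball hinner]
    rw [integral_mul_const]
    ring
  rw [hLHS, hRHS] at hswap
  have h2pi : ((2*π : ℝ) : ℂ) ≠ 0 := by
    simp only [ne_eq, ofReal_eq_zero]
    positivity
  exact mul_left_cancel₀ h2pi hswap
end
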